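/- arXiv:1908.11840 — 4 statements merged into one kernel-verified Lean document; each statement's English description precedes it below -/
import Mathlib

section
/- Let d ∈ ℕ, m ≥ 0, real numbers λ₁ > λ₂ > … > λ_d > 0, and K > 0. Then there exists a constant C > 0, depending only on d, m, λ₁,…,λ_d and K, such that the following holds: for every ε ∈ (0,1] and every 0 ≤ r ≤ T with ε·e^{2λ₁T} ≤ 1, if a¹,…,a^d : [r,T] → ℝ are nonnegative continuous functions satisfying a^i(t) ≤ K·(ε^m e^{−2λ_i r} + ε² Σ_{k=1}^d ∫_r^t e^{2(λ_k−λ_i)s} a^k(s) ds) for all t ∈ [r,T] and all i = 1,…,d, then a^i(t) ≤ C·ε^m e^{−2λ_d r} for all t ∈ [r,T] and all i = 1,…,d. -/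
open Real MeasureTheory

/-- Gronwall-type estimate for a system of integral inequalities (Lemma 5.1).
Here `lam 0 = λ₁ > lam 1 = λ₂ > … > lam (Fin.last n) = λ_d > 0` with `d = n + 1`. -/
theorem long_exit_gronwall_system (n : ℕ) (m : ℝ) (hm : 0 ≤ m)
    (lam : Fin (n + 1) → ℝ) (hanti : StrictAnti lam) (hpos : ∀ i, 0 < lam i)
    (K : ℝ) (hK : 0 < K) :
    ∃ C > 0, ∀ ε : ℝ, 0 < ε → ε ≤ 1 → ∀ r T : ℝ, 0 ≤ r → r ≤ T →
      ε * Real.exp (2 * lam 0 * T) ≤ 1 →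
      ∀ a : Fin (n + 1) → ℝ → ℝ,
        (∀ i, ContinuousOn (a i) (Set.Icc r T)) →
        (∀ i, ∀ t ∈ Set.Icc r T, 0 ≤ a i t) →
        (∀ i, ∀ t ∈ Set.Icc r T, a i t ≤
          K * (ε ^ m * Real.exp (-(2 * lam i) * r) +
            ε ^ 2 * ∑ k, ∫ s in r..t, Real.exp (2 * (lam k - lam i) * s) * a k s)) →
        ∀ i, ∀ t ∈ Set.Icc r T,
          a i t ≤ C * ε ^ m * Real.exp (-(2 * lam (Fin.last n)) * r) := by
  have hl1 : 0 < lam 0 := hpos 0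
  set d : ℝ := (n : ℝ) + 1 with hd
  have hd0 : 0 < d := by positivity
  refine ⟨K * Real.exp (K * d / (2 * lam 0)), by positivity, ?_⟩
  intro ε hε hε1 r T hr hrT hεe a hacont hapos hineq
  have hT0 : 0 ≤ T := hr.trans hrT
  have hεm : 0 < ε ^ m := Real.rpow_pos_of_pos hε m
  have hlle : ∀ i, lam i ≤ lam 0 := fun i => hanti.antitone (Fin.zero_le i)
  -- basic exponential bounds
  have hexpfact : ∀ (i : Fin (n+1)) (x : ℝ), 0 ≤ x → x ≤ T →
      Real.exp (2 * lam i * x) ≤ 1 / ε := by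
    intro i x hx hxT
    rw [le_div_iff₀ hε, mul_comm]
    calc ε * Real.exp (2 * lam i * x) ≤ ε * Real.exp (2 * lam 0 * T) := by
          have : 2 * lam i * x ≤ 2 * lam 0 * T := by nlinarith [hpos i, hlle i]
          exact mul_le_mul_of_nonneg_left (Real.exp_le_exp.2 this) hε.le
      _ ≤ 1 := hεe
  have hεT : ε * T ≤ 1 / (2 * lam 0) := by
    have h1 : 2 * lam 0 * T ≤ Real.exp (2 * lam 0 * T) := by
      linarith [Real.add_one_le_exp (2 * lam 0 * T)]
    have h2 : Real.exp (2 * lam 0 * T) ≤ 1 / ε := by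
      rw [le_div_iff₀ hε]; linarith [hεe, mul_comm ε (Real.exp (2 * lam 0 * T))]
    rw [le_div_iff₀ (by positivity : (0:ℝ) < 2 * lam 0)]
    have h3 : 2 * lam 0 * T ≤ 1 / ε := h1.trans h2
    calc ε * T * (2 * lam 0) = ε * (2 * lam 0 * T) := by ring
      _ ≤ ε * (1 / ε) := mul_le_mul_of_nonneg_left h3 hε.le
      _ = 1 := by field_simp
  -- the clamp function
  set c : ℝ → ℝ := fun s => max r (min s T) with hc
  have hcmem : ∀ s, c s ∈ Set.Icc r T :=
    fun s => ⟨le_max_left _ _, max_le hrT (min_le_right _ _)⟩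
  have hccont : Continuous c := continuous_const.max (continuous_id.min continuous_const)
  have hceq : ∀ s ∈ Set.Icc r T, c s = s := by
    intro s hs; simp only [hc]; rw [min_eq_left hs.2, max_eq_right hs.1]
  -- the function B and its primitive F
  set B : ℝ → ℝ := fun s => ∑ k, Real.exp (2 * lam k * s) * a k (c s) with hB
  have hBcont : Continuous B := by
    refine continuous_finset_sum _ fun k _ => Continuous.mul (by fun_prop) ?_
    exact (hacont k).comp_continuous hccont hcmem
  have hBnonneg : ∀ s, 0 ≤ B s :=
    fun s => Finset.sum_nonneg fun k _ =>
      mul_nonneg (Real.exp_nonneg _) (hapos k _ (hcmem s))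
  have hBeq : ∀ s ∈ Set.Icc r T, B s = ∑ k, Real.exp (2 * lam k * s) * a k s := by
    intro s hs; simp only [hB, hceq s hs]
  set F : ℝ → ℝ := fun t => ∫ s in r..t, B s with hF
  have hF' : ∀ t, HasDerivAt F (B t) t :=
    fun t => (hBcont.integral_hasStrictDerivAt r t).hasDerivAt
  have hFcont : Continuous F := by
    have : Differentiable ℝ F := fun t => (hF' t).differentiableAt
    exact this.continuous
  have hFnonneg : ∀ t, r ≤ t → 0 ≤ F t := by
    intro t ht
    exact intervalIntegral.integral_nonneg ht fun s _ => hBnonneg s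
  -- integrability of the various integrands
  have haint : ∀ (k : Fin (n+1)) (t : ℝ), t ∈ Set.Icc r T → ∀ (g : ℝ → ℝ), Continuous g →
      IntervalIntegrable (fun s => g s * a k s) volume r t := by
    intro k t ht g hg
    apply ContinuousOn.intervalIntegrable
    rw [Set.uIcc_of_le ht.1]
    exact hg.continuousOn.mul ((hacont k).mono (Set.Icc_subset_Icc le_rfl ht.2))
  -- sum of the natural integrals equals F
  have hsumF : ∀ t ∈ Set.Icc r T,
      ∑ k, ∫ s in r..t, Real.exp (2 * lam k * s) * a k s = F t := by
    intro t ht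
    rw [hF]
    rw [← intervalIntegral.integral_finset_sum]
    · apply intervalIntegral.integral_congr
      intro s hs
      rw [Set.uIcc_of_le ht.1] at hs
      exact (hBeq s ⟨hs.1, hs.2.trans ht.2⟩).symm
    · intro k _
      exact haint k t ht _ (by fun_prop)
  -- Step 1: the scalar integral inequality for B
  set α : ℝ := K * d * (ε ^ m / ε) with hα
  set β : ℝ := K * d * ε with hβ
  have hβ0 : 0 < β := by positivity
  have key : ∀ t ∈ Set.Icc r T, B t ≤ α + β * F t := by
    intro t ht
    have hrt : r ≤ t := ht.1
    have htT : t ≤ T := ht.2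
    have hsub : Set.Icc r t ⊆ Set.Icc r T := Set.Icc_subset_Icc le_rfl htT
    have step_i : ∀ i : Fin (n+1),
        Real.exp (2 * lam i * t) * a i t ≤ K * (ε ^ m / ε) + K * ε * F t := by
      intro i
      set E : ℝ := Real.exp (2 * lam i * t) with hE
      have hE0 : 0 ≤ E := Real.exp_nonneg _
      have h1 : E * a i t ≤ E * (K * (ε ^ m * Real.exp (-(2 * lam i) * r) +
          ε ^ 2 * ∑ k, ∫ s in r..t, Real.exp (2 * (lam k - lam i) * s) * a k s)) :=
        mul_le_mul_of_nonneg_left (hineq i t ht) hE0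
      have claim1 : E * Real.exp (-(2 * lam i) * r) ≤ 1 / ε := by
        rw [hE, ← Real.exp_add]
        have : 2 * lam i * t + -(2 * lam i) * r = 2 * lam i * (t - r) := by ring
        rw [this]
        exact hexpfact i (t - r) (by linarith) (by linarith)
      have claim2 : E * (∑ k, ∫ s in r..t, Real.exp (2 * (lam k - lam i) * s) * a k s)
          ≤ (1 / ε) * F t := by
        rw [Finset.mul_sum]
        have hterm : ∀ k : Fin (n+1),
            E * ∫ s in r..t, Real.exp (2 * (lam k - lam i) * s) * a k s
            ≤ (1/ε) * ∫ s in r..t, Real.exp (2 * lam k * s) * a k s := by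
          intro k
          rw [← intervalIntegral.integral_const_mul, ← intervalIntegral.integral_const_mul]
          apply intervalIntegral.integral_mono_on hrt
          · exact ((haint k t ht _ (by fun_prop)).const_mul E)
          · exact ((haint k t ht _ (by fun_prop)).const_mul (1/ε))
          · intro s hs
            have hexp : E * Real.exp (2 * (lam k - lam i) * s)
                ≤ (1/ε) * Real.exp (2 * lam k * s) := by
              have heq : E * Real.exp (2 * (lam k - lam i) * s)
                  = Real.exp (2 * lam i * (t - s)) * Real.exp (2 * lam k * s) := by
                rw [hE, ← Real.exp_add, ← Real.exp_add]; ring_nf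
              rw [heq]
              exact mul_le_mul_of_nonneg_right
                (hexpfact i (t - s) (by linarith [hs.2]) (by linarith [hs.1, hr]))
                (Real.exp_nonneg _)
            calc E * (Real.exp (2 * (lam k - lam i) * s) * a k s)
                = (E * Real.exp (2 * (lam k - lam i) * s)) * a k s := by ring
              _ ≤ ((1/ε) * Real.exp (2 * lam k * s)) * a k s :=
                  mul_le_mul_of_nonneg_right hexp (hapos k s (hsub hs))
              _ = (1/ε) * (Real.exp (2 * lam k * s) * a k s) := by ring
        calc ∑ k, E * ∫ s in r..t, Real.exp (2 * (lam k - lam i) * s) * a k s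
            ≤ ∑ k, (1/ε) * ∫ s in r..t, Real.exp (2 * lam k * s) * a k s :=
              Finset.sum_le_sum fun k _ => hterm k
          _ = (1/ε) * ∑ k, ∫ s in r..t, Real.exp (2 * lam k * s) * a k s := by
              rw [Finset.mul_sum]
          _ = (1/ε) * F t := by rw [hsumF t ht]
      have hFt : 0 ≤ F t := hFnonneg t hrt
      calc E * a i t ≤ E * (K * (ε ^ m * Real.exp (-(2 * lam i) * r) +
            ε ^ 2 * ∑ k, ∫ s in r..t, Real.exp (2 * (lam k - lam i) * s) * a k s)) := h1
        _ = K * ε ^ m * (E * Real.exp (-(2 * lam i) * r)) +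
            K * ε ^ 2 * (E * ∑ k, ∫ s in r..t, Real.exp (2 * (lam k - lam i) * s) * a k s) := by
              ring
        _ ≤ K * ε ^ m * (1/ε) + K * ε ^ 2 * ((1/ε) * F t) := by
              refine add_le_add
                (mul_le_mul_of_nonneg_left claim1 (by positivity))
                (mul_le_mul_of_nonneg_left claim2 (by positivity))
        _ = K * (ε ^ m / ε) + K * ε * F t := by
              field_simp
    calc B t = ∑ i, Real.exp (2 * lam i * t) * a i t := hBeq t ht
      _ ≤ ∑ _i : Fin (n+1), (K * (ε ^ m / ε) + K * ε * F t) :=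
          Finset.sum_le_sum fun i _ => step_i i
      _ = d * (K * (ε ^ m / ε) + K * ε * F t) := by
          rw [Finset.sum_const, Finset.card_univ, Fintype.card_fin, nsmul_eq_mul, hd]
          push_cast; ring
      _ = α + β * F t := by rw [hα, hβ]; ring
  -- Step 2: Gronwall for F
  have hgron : ∀ t ∈ Set.Icc r T, ‖F t‖ ≤ gronwallBound 0 β α (t - r) := by
    apply norm_le_gronwallBound_of_norm_deriv_right_le (f := F) (f' := B)
      hFcont.continuousOn (fun t _ => (hF' t).hasDerivWithinAt)
    · simp [hF, intervalIntegral.integral_same]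
    · intro t htIco
      have ht : t ∈ Set.Icc r T := ⟨htIco.1, htIco.2.le⟩
      rw [Real.norm_eq_abs, abs_of_nonneg (hBnonneg t),
        Real.norm_eq_abs, abs_of_nonneg (hFnonneg t ht.1)]
      linarith [key t ht]
  set c0 : ℝ := Real.exp (K * d / (2 * lam 0)) with hc0
  have hFbound : ∀ t ∈ Set.Icc r T, F t ≤ ε ^ m / ε ^ 2 * (c0 - 1) := by
    intro t ht
    have h1 : F t ≤ gronwallBound 0 β α (t - r) :=
      (le_abs_self _).trans (hgron t ht)
    rw [gronwallBound_of_K_ne_0 hβ0.ne'] at h1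
    simp only [zero_mul, zero_add] at h1
    have hβq : α / β = ε ^ m / ε ^ 2 := by
      rw [hα, hβ]; field_simp
    have hexpb : Real.exp (β * (t - r)) ≤ c0 := by
      rw [hc0]
      apply Real.exp_le_exp.2
      have htr : t - r ≤ T := by
        have := ht.2; linarith
      have h2 : ε * (t - r) ≤ 1 / (2 * lam 0) := by
        have h3 : ε * (t - r) ≤ ε * T := by
          apply mul_le_mul_of_nonneg_left htr hε.le
        linarith
      calc β * (t - r) = K * d * (ε * (t - r)) := by rw [hβ]; ring
        _ ≤ K * d * (1 / (2 * lam 0)) :=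
            mul_le_mul_of_nonneg_left h2 (by positivity)
        _ = K * d / (2 * lam 0) := by ring
    have hαβ : 0 ≤ α / β := by positivity
    calc F t ≤ α / β * (Real.exp (β * (t - r)) - 1) := h1
      _ ≤ α / β * (c0 - 1) := by
          apply mul_le_mul_of_nonneg_left _ hαβ
          linarith
      _ = ε ^ m / ε ^ 2 * (c0 - 1) := by rw [hβq]
  -- Step 3: conclusion
  intro i t ht
  have hrt : r ≤ t := ht.1
  have hsub : Set.Icc r t ⊆ Set.Icc r T := Set.Icc_subset_Icc le_rfl ht.2
  have hJ : ∀ k : Fin (n+1), ∫ s in r..t, Real.exp (2 * (lam k - lam i) * s) * a k s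
      ≤ Real.exp (-(2 * lam i) * r) * ∫ s in r..t, Real.exp (2 * lam k * s) * a k s := by
    intro k
    rw [← intervalIntegral.integral_const_mul]
    apply intervalIntegral.integral_mono_on hrt
    · exact haint k t ht _ (by fun_prop)
    · exact (haint k t ht _ (by fun_prop)).const_mul _
    · intro s hs
      have heq : Real.exp (2 * (lam k - lam i) * s)
          = Real.exp (-(2 * lam i) * s) * Real.exp (2 * lam k * s) := by
        rw [← Real.exp_add]; ring_nf
      have hmon : Real.exp (-(2 * lam i) * s) ≤ Real.exp (-(2 * lam i) * r) := by
        apply Real.exp_le_exp.2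
        nlinarith [hpos i, hs.1]
      calc Real.exp (2 * (lam k - lam i) * s) * a k s
          = (Real.exp (-(2 * lam i) * s) * Real.exp (2 * lam k * s)) * a k s := by
            rw [heq]
        _ ≤ (Real.exp (-(2 * lam i) * r) * Real.exp (2 * lam k * s)) * a k s := by
            apply mul_le_mul_of_nonneg_right _ (hapos k s (hsub hs))
            exact mul_le_mul_of_nonneg_right hmon (Real.exp_nonneg _)
        _ = Real.exp (-(2 * lam i) * r) * (Real.exp (2 * lam k * s) * a k s) := by ring
  have hsumJ : ∑ k, ∫ s in r..t, Real.exp (2 * (lam k - lam i) * s) * a k s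
      ≤ Real.exp (-(2 * lam i) * r) * F t := by
    calc ∑ k, ∫ s in r..t, Real.exp (2 * (lam k - lam i) * s) * a k s
        ≤ ∑ k, Real.exp (-(2 * lam i) * r) * ∫ s in r..t, Real.exp (2 * lam k * s) * a k s :=
          Finset.sum_le_sum fun k _ => hJ k
      _ = Real.exp (-(2 * lam i) * r) * ∑ k, ∫ s in r..t, Real.exp (2 * lam k * s) * a k s := by
          rw [Finset.mul_sum]
      _ = Real.exp (-(2 * lam i) * r) * F t := by rw [hsumF t ht]
  have hFt : F t ≤ ε ^ m / ε ^ 2 * (c0 - 1) := hFbound t ht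
  have hFt0 : 0 ≤ F t := hFnonneg t hrt
  have hexpr : Real.exp (-(2 * lam i) * r) ≤ Real.exp (-(2 * lam (Fin.last n)) * r) := by
    apply Real.exp_le_exp.2
    have : lam (Fin.last n) ≤ lam i := hanti.antitone (Fin.le_last i)
    nlinarith
  have hc01 : (1:ℝ) ≤ c0 := by
    rw [hc0]; have : (0:ℝ) ≤ K * d / (2 * lam 0) := by positivity
    calc (1:ℝ) = Real.exp 0 := (Real.exp_zero).symm
      _ ≤ _ := Real.exp_le_exp.2 this
  have hmain : a i t ≤ K * c0 * ε ^ m * Real.exp (-(2 * lam i) * r) := by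
    have h1 := hineq i t ht
    have h2 : ε ^ 2 * ∑ k, ∫ s in r..t, Real.exp (2 * (lam k - lam i) * s) * a k s
        ≤ ε ^ 2 * (Real.exp (-(2 * lam i) * r) * (ε ^ m / ε ^ 2 * (c0 - 1))) := by
      apply mul_le_mul_of_nonneg_left _ (by positivity)
      exact hsumJ.trans (mul_le_mul_of_nonneg_left hFt (Real.exp_nonneg _))
    have h3 : ε ^ 2 * (Real.exp (-(2 * lam i) * r) * (ε ^ m / ε ^ 2 * (c0 - 1)))
        = ε ^ m * Real.exp (-(2 * lam i) * r) * (c0 - 1) := by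
      field_simp
    calc a i t ≤ K * (ε ^ m * Real.exp (-(2 * lam i) * r) +
          ε ^ 2 * ∑ k, ∫ s in r..t, Real.exp (2 * (lam k - lam i) * s) * a k s) := h1
      _ ≤ K * (ε ^ m * Real.exp (-(2 * lam i) * r) +
          ε ^ m * Real.exp (-(2 * lam i) * r) * (c0 - 1)) := by
          apply mul_le_mul_of_nonneg_left _ hK.le
          rw [← h3]
          exact add_le_add (le_refl _) h2
      _ = K * c0 * ε ^ m * Real.exp (-(2 * lam i) * r) := by ring
  calc a i t ≤ K * c0 * ε ^ m * Real.exp (-(2 * lam i) * r) := hmain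
    _ ≤ K * c0 * ε ^ m * Real.exp (-(2 * lam (Fin.last n)) * r) := by
        apply mul_le_mul_of_nonneg_left hexpr (by positivity)
    _ = K * Real.exp (K * d / (2 * lam 0)) * ε ^ m *
        Real.exp (-(2 * lam (Fin.last n)) * r) := by rw [hc0]
end

section
/- Let (Ω, F, P) be a probability space, d ∈ ℕ, and let A : Ω → (d×d real matrices) be measurable such that A(ω) is symmetric positive semidefinite almost surely. Let ν(ω) denote the smallest eigenvalue of A(ω). Then for each p ≥ 1 there is a constant C_{p,d} > 0, depending only on p and d, such that for all ζ ≥ 0: P(ν ≤ ζ) ≤ C_{p,d}·( sup_{v ∈ ℝ^d, |v|=1} E[ ⟨v, A v⟩^{−(p+2d)} ] + E[ (Σ_{i,j=1}^d |A^{ij}|²)^{p/2} ] )·ζ^p, provided both expectations on the right-hand side are finite (with ⟨v, A v⟩ > 0 a.s. for every unit vector v). -/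
open MeasureTheory Matrix

-- Cauchy–Schwarz bound for the bilinear form
lemma aux_cs {d : ℕ} (M : Matrix (Fin d) (Fin d) ℝ) (v w : Fin d → ℝ) :
    |v ⬝ᵥ M.mulVec w| ≤
      Real.sqrt (∑ i, v i ^ 2) * (Real.sqrt (∑ i, ∑ j, M i j ^ 2) * Real.sqrt (∑ i, w i ^ 2)) := by
  have h2 : (∑ i, (M.mulVec w i) ^ 2) ≤ (∑ i, ∑ j, M i j ^ 2) * (∑ i, w i ^ 2) := by
    rw [Finset.sum_mul]
    apply Finset.sum_le_sum
    intro i _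
    have := Finset.sum_mul_sq_le_sq_mul_sq Finset.univ (M i) w
    simpa [Matrix.mulVec, dotProduct] using this
  have hcs := Finset.sum_mul_sq_le_sq_mul_sq Finset.univ v (M.mulVec w)
  have h1 : (v ⬝ᵥ M.mulVec w) ^ 2 ≤ (∑ i, v i ^ 2) * ((∑ i, ∑ j, M i j ^ 2) * (∑ i, w i ^ 2)) := by
    have hv : (0:ℝ) ≤ ∑ i, v i ^ 2 := Finset.sum_nonneg fun i _ => sq_nonneg _
    calc (v ⬝ᵥ M.mulVec w)^2 ≤ (∑ i, v i ^2) * (∑ i, (M.mulVec w i)^2) := by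
            simpa [dotProduct] using hcs
      _ ≤ _ := by exact mul_le_mul_of_nonneg_left h2 hv
  rw [← Real.sqrt_sq_eq_abs]
  calc Real.sqrt ((v ⬝ᵥ M.mulVec w)^2) ≤ Real.sqrt ((∑ i, v i ^ 2) * ((∑ i, ∑ j, M i j ^ 2) * (∑ i, w i ^ 2))) :=
        Real.sqrt_le_sqrt h1
    _ = _ := by
        rw [Real.sqrt_mul (Finset.sum_nonneg fun i _ => sq_nonneg _),
          Real.sqrt_mul (x := ∑ i, ∑ j, M i j ^ 2) (by positivity)]



lemma aux_eig {d : ℕ} {M : Matrix (Fin d) (Fin d) ℝ} {t : ℝ} (ht : t ∈ spectrum ℝ M) :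
    ∃ u : Fin d → ℝ, (∑ i, u i ^ 2) = 1 ∧ u ⬝ᵥ M.mulVec u = t := by
  rw [spectrum.mem_iff] at ht
  have hdet : (algebraMap ℝ (Matrix (Fin d) (Fin d) ℝ) t - M).det = 0 := by
    by_contra h
    exact ht ((Matrix.isUnit_iff_isUnit_det _).2 (isUnit_iff_ne_zero.2 h))
  obtain ⟨w, hw0, hw⟩ := Matrix.exists_mulVec_eq_zero_iff.2 hdet
  have hMw : M.mulVec w = t • w := by
    have h1 : (algebraMap ℝ (Matrix (Fin d) (Fin d) ℝ) t - M).mulVec w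
        = t • w - M.mulVec w := by
      rw [Matrix.sub_mulVec]
      congr 1
      rw [Algebra.algebraMap_eq_smul_one, Matrix.smul_mulVec, Matrix.one_mulVec]
    rw [h1] at hw
    exact (sub_eq_zero.1 hw).symm
  -- normalize
  have hsum_pos : 0 < ∑ i, w i ^ 2 := by
    obtain ⟨i, hi⟩ := Function.ne_iff.1 hw0
    exact Finset.sum_pos' (fun j _ => sq_nonneg _) ⟨i, Finset.mem_univ i, pow_two_pos_of_ne_zero hi⟩
  set n : ℝ := Real.sqrt (∑ i, w i ^ 2) with hn
  have hnpos : 0 < n := Real.sqrt_pos.2 hsum_pos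
  refine ⟨n⁻¹ • w, ?_, ?_⟩
  · have : ∑ i, (n⁻¹ • w) i ^ 2 = n⁻¹^2 * ∑ i, w i ^ 2 := by
      rw [Finset.mul_sum]; congr 1; ext i
      simp [Pi.smul_apply, smul_eq_mul, mul_pow]
    rw [this, hn, inv_pow, Real.sq_sqrt hsum_pos.le]
    field_simp
  · have hmv : M.mulVec (n⁻¹ • w) = n⁻¹ • (t • w) := by
      rw [Matrix.mulVec_smul, hMw]
    rw [hmv]
    have : (n⁻¹ • w) ⬝ᵥ (n⁻¹ • (t • w)) = n⁻¹^2 * t * ∑ i, w i ^2 := by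
      simp [dotProduct, Pi.smul_apply, smul_eq_mul, Finset.mul_sum]
      ring_nf
      congr 1; ext i; ring
    rw [this, inv_pow, hn, Real.sq_sqrt hsum_pos.le]
    field_simp


-- net lemma: every unit vector is within 2hd (in squared-sum distance) of a
-- normalized rescaled integer point with coordinates bounded by ⌈1/h⌉₊+1
lemma aux_net {d : ℕ} (h : ℝ) (hh0 : 0 < h) (hhd : h * d ≤ 1/2)
    (hd : 0 < d) (u : Fin d → ℝ) (hu : ∑ i, u i ^ 2 = 1) :
    ∃ x : Fin d → ℤ, (∀ i, |x i| ≤ (⌈1/h⌉₊ : ℤ) + 1) ∧ (∑ j, (h * x j) ^ 2) ≠ 0 ∧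
      ∑ i, ((Real.sqrt (∑ j, (h * x j) ^ 2))⁻¹ * (h * x i) - u i) ^ 2 ≤ (2 * h * d) ^ 2 := by
  classical
  set x : Fin d → ℤ := fun i => round (u i / h) with hx
  have habs : ∀ i, |h * x i - u i| ≤ h / 2 := by
    intro i
    have := abs_sub_round (u i / h)
    calc |h * x i - u i| = h * |x i - u i / h| := by
          rw [← abs_of_pos hh0, ← abs_mul, abs_of_pos hh0]
          congr 1
          field_simp
      _ ≤ h * (1/2) := by
          apply mul_le_mul_of_nonneg_left _ hh0.le
          simpa [abs_sub_comm] using this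
      _ = h / 2 := by ring
  have hui : ∀ i, |u i| ≤ 1 := by
    intro i
    have h1 : u i ^ 2 ≤ 1 := by
      rw [← hu]
      exact Finset.single_le_sum (fun j _ => sq_nonneg (u j)) (Finset.mem_univ i)
    nlinarith [abs_nonneg (u i), sq_abs (u i)]
  have hbnd : ∀ i, |x i| ≤ (⌈1/h⌉₊ : ℤ) + 1 := by
    intro i
    have h1 : (|x i| : ℝ) ≤ 1/h + 1 := by
      have h2 : |h * (x i : ℝ)| ≤ |u i| + h/2 := by
        have := habs i
        have := abs_sub_abs_le_abs_sub (h * (x i:ℝ)) (u i)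
        linarith
      have h3 : h * |(x i : ℝ)| ≤ 1 + h/2 := by
        rw [abs_mul, abs_of_pos hh0] at h2
        linarith [hui i]
      have h4 : |(x i:ℝ)| ≤ (1 + h/2)/h := by
        rw [le_div_iff₀ hh0]; linarith
      calc |(x i:ℝ)| ≤ (1+h/2)/h := h4
        _ = 1/h + 1/2 := by field_simp
        _ ≤ 1/h + 1 := by linarith
    have h5 : (1:ℝ)/h ≤ (⌈1/h⌉₊ : ℝ) := Nat.le_ceil _
    have : (|x i| : ℝ) ≤ ((⌈1/h⌉₊ : ℤ) : ℝ) + 1 := by push_cast; push_cast at h1; linarith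
    exact_mod_cast this
  have key : (∑ j, (h * x j) ^ 2) ≠ 0 ∧
      ∑ i, ((Real.sqrt (∑ j, (h * x j) ^ 2))⁻¹ * (h * x i) - u i) ^ 2 ≤ (2 * h * d) ^ 2 := by
    have hd1 : (1:ℝ) ≤ d := by exact_mod_cast hd
    set g : EuclideanSpace ℝ (Fin d) := (WithLp.equiv 2 _).symm (fun i => h * x i) with hg
    set uE : EuclideanSpace ℝ (Fin d) := (WithLp.equiv 2 _).symm u with huE
    have hgi : ∀ i, g i = h * x i := fun i => rfl
    have hui : ∀ i, uE i = u i := fun i => rfl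
    have hnormu : ‖uE‖ = 1 := by
      rw [EuclideanSpace.norm_eq]
      simp only [Real.norm_eq_abs, sq_abs, hui]
      rw [hu, Real.sqrt_one]
    have hgu : ‖g - uE‖ ≤ h * d / 2 := by
      rw [EuclideanSpace.norm_eq]
      have h1 : ∑ i, ‖(g - uE) i‖ ^ 2 ≤ (h * d / 2)^2 := by
        calc ∑ i, ‖(g - uE) i‖ ^ 2 ≤ ∑ _i : Fin d, (h/2)^2 := by
              apply Finset.sum_le_sum
              intro i _
              rw [PiLp.sub_apply, hgi, hui, Real.norm_eq_abs]
              exact pow_le_pow_left₀ (abs_nonneg _) (habs i) 2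
          _ = d * (h/2)^2 := by rw [Finset.sum_const]; simp [mul_comm]
          _ ≤ (h * d / 2)^2 := by nlinarith
      calc Real.sqrt (∑ i, ‖(g - uE) i‖ ^ 2) ≤ Real.sqrt ((h * d / 2)^2) := Real.sqrt_le_sqrt h1
        _ = h * d / 2 := Real.sqrt_sq (by positivity)
    have hng : 3/4 ≤ ‖g‖ := by
      have := norm_sub_norm_le uE g
      rw [norm_sub_rev uE g] at this
      rw [hnormu] at this
      linarith
    have hgpos : 0 < ‖g‖ := by linarith
    have hsqrt : Real.sqrt (∑ j, (h * x j) ^ 2) = ‖g‖ := by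
      rw [EuclideanSpace.norm_eq]
      congr 1
      apply Finset.sum_congr rfl
      intro i _
      rw [hgi, Real.norm_eq_abs, sq_abs]
    have hsum_eq : (∑ j, (h * x j) ^ 2) = ‖g‖^2 := by
      rw [← hsqrt, Real.sq_sqrt (Finset.sum_nonneg fun j _ => sq_nonneg _)]
    constructor
    · rw [hsum_eq]; positivity
    · set v : EuclideanSpace ℝ (Fin d) := ‖g‖⁻¹ • g with hv
      have hvi : ∀ i, v i = (Real.sqrt (∑ j, (h * x j) ^ 2))⁻¹ * (h * x i) := by
        intro i
        rw [hv, PiLp.smul_apply, hgi, hsqrt, smul_eq_mul]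
      have hvg : ‖v - g‖ ≤ h * d / 2 := by
        have h1 : v - g = (‖g‖⁻¹ - 1) • g := by rw [sub_smul, one_smul, hv]
        rw [h1, norm_smul, Real.norm_eq_abs]
        have h2 : |‖g‖⁻¹ - 1| * ‖g‖ = |1 - ‖g‖| := by
          rw [← abs_of_pos hgpos, ← abs_mul]
          rw [abs_of_pos hgpos]
          rw [sub_mul, inv_mul_cancel₀ (ne_of_gt hgpos), one_mul, abs_sub_comm]
        rw [h2]
        have h3 : |1 - ‖g‖| ≤ ‖g - uE‖ := by
          rw [← hnormu, abs_sub_comm]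
          exact (abs_norm_sub_norm_le g uE)
        linarith
      have hfin : ‖v - uE‖ ≤ 2 * h * d := by
        calc ‖v - uE‖ ≤ ‖v - g‖ + ‖g - uE‖ := norm_sub_le_norm_sub_add_norm_sub v g uE
          _ ≤ h * d / 2 + h * d / 2 := add_le_add hvg hgu
          _ ≤ 2 * h * d := by nlinarith
      have : ∑ i, ((Real.sqrt (∑ j, (h * x j) ^ 2))⁻¹ * (h * x i) - u i) ^ 2 = ‖v - uE‖^2 := by
        rw [EuclideanSpace.norm_eq, Real.sq_sqrt (Finset.sum_nonneg fun j _ => sq_nonneg _)]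
        apply Finset.sum_congr rfl
        intro i _
        rw [PiLp.sub_apply, hvi, hui, Real.norm_eq_abs, sq_abs]
      rw [this]
      nlinarith [norm_nonneg (v - uE)]
  exact ⟨x, hbnd, key.1, key.2⟩

set_option maxHeartbeats 1000000 in
lemma aux_main {d : ℕ} (hd : 0 < d) {p : ℝ} (hp : 1 ≤ p)
    {Ω : Type} [mΩ : MeasurableSpace Ω] (P : Measure Ω) [hPP : IsProbabilityMeasure P]
    (A : Ω → Matrix (Fin d) (Fin d) ℝ) (ν : Ω → ℝ)
    (hν : ∀ᵐ ω ∂P, ν ω ∈ spectrum ℝ (A ω))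
    (hpos : ∀ v : Fin d → ℝ, (∑ i, v i ^ 2) = 1 → ∀ᵐ ω ∂P, 0 < v ⬝ᵥ (A ω).mulVec v)
    (hint : ∀ v : Fin d → ℝ, (∑ i, v i ^ 2) = 1 →
        Integrable (fun ω => (v ⬝ᵥ (A ω).mulVec v) ^ (-(p + 2 * (d : ℝ)))) P)
    (hbdd : BddAbove (Set.range (fun v : {v : Fin d → ℝ // (∑ i, v i ^ 2) = 1} =>
        ∫ ω, ((v : Fin d → ℝ) ⬝ᵥ (A ω).mulVec (v : Fin d → ℝ)) ^ (-(p + 2 * (d : ℝ))) ∂P)))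
    (hF : Integrable (fun ω => (∑ i, ∑ j, (A ω i j) ^ 2) ^ (p / 2)) P)
    (hS0 : 0 ≤ ⨆ v : {v : Fin d → ℝ // (∑ i, v i ^ 2) = 1},
        ∫ ω, ((v : Fin d → ℝ) ⬝ᵥ (A ω).mulVec (v : Fin d → ℝ)) ^ (-(p + 2 * (d : ℝ))) ∂P)
    (ζ : ℝ) (h0 : 0 < ζ) (h1 : ζ < 1) :
    (P {ω | ν ω ≤ ζ}).toReal ≤
      ((14 * d : ℝ) ^ d * 4 ^ (p + 2 * (d : ℝ)) + 1) *
        ((⨆ v : {v : Fin d → ℝ // (∑ i, v i ^ 2) = 1},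
            ∫ ω, ((v : Fin d → ℝ) ⬝ᵥ (A ω).mulVec (v : Fin d → ℝ)) ^
              (-(p + 2 * (d : ℝ))) ∂P) +
          ∫ ω, (∑ i, ∑ j, (A ω i j) ^ 2) ^ (p / 2) ∂P) * ζ ^ p := by
  classical
  set q : ℝ := p + 2 * (d : ℝ) with hqdef
  set S : ℝ := ⨆ v : {v : Fin d → ℝ // (∑ i, v i ^ 2) = 1},
      ∫ ω, ((v : Fin d → ℝ) ⬝ᵥ (A ω).mulVec (v : Fin d → ℝ)) ^ (-q) ∂P with hSdef
  set J : ℝ := ∫ ω, (∑ i, ∑ j, (A ω i j) ^ 2) ^ (p / 2) ∂P with hJdef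
  have hd1 : (1:ℝ) ≤ d := by exact_mod_cast hd
  have hq0 : 0 < q := by simp only [hqdef]; linarith
  have hqp : q = p + 2 * (d:ℝ) := hqdef
  -- grid scale
  set h : ℝ := ζ ^ 2 / (2 * (d:ℝ)) with hhdef
  have hh0 : 0 < h := by positivity
  have hhd : h * d ≤ 1 / 2 := by
    rw [hhdef]
    rw [div_mul_eq_mul_div, div_le_div_iff₀ (by positivity) (by norm_num)]
    have hz2 : ζ ^ 2 ≤ 1 := by nlinarith
    nlinarith
  have hh1 : h ≤ 1/2 := by
    have := mul_le_mul_of_nonneg_right hhd (le_of_lt (by positivity : (0:ℝ) < (d:ℝ)⁻¹))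
    calc h = h * (d:ℝ) * (d:ℝ)⁻¹ := by field_simp
      _ ≤ 1/2 * (d:ℝ)⁻¹ := this
      _ ≤ 1/2 * 1 := by
          apply mul_le_mul_of_nonneg_left _ (by norm_num)
          rw [inv_le_one_iff₀]; right; exact hd1
      _ = 1/2 := mul_one _
  set K : ℕ := ⌈1/h⌉₊ + 1 with hKdef
  set T : Finset (Fin d → ℤ) := Fintype.piFinset fun _ => Finset.Icc (-(K:ℤ)) (K:ℤ) with hTdef
  set w : (Fin d → ℤ) → Fin d → ℝ :=
    fun x i => (Real.sqrt (∑ j, (h * x j) ^ 2))⁻¹ * (h * x i) with hwdef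
  set Sx : (Fin d → ℤ) → Set Ω := fun x =>
    {ω | (∑ i, (w x) i ^ 2) = 1 ∧ (w x) ⬝ᵥ (A ω).mulVec (w x) ≤ 4 * ζ} with hSxdef
  set B : Set Ω := {ω | ζ ^ (-p) ≤ (∑ i, ∑ j, (A ω i j) ^ 2) ^ (p / 2)} with hBdef
  set N : Set Ω := {ω | ¬ ν ω ∈ spectrum ℝ (A ω)} with hNdef
  have hN : P N = 0 := by
    rw [hNdef]; exact hν
  -- inclusion
  have hsub : {ω | ν ω ≤ ζ} ⊆ ((⋃ x ∈ T, Sx x) ∪ B) ∪ N := by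
    intro ω hω
    simp only [Set.mem_setOf_eq] at hω
    by_cases hspec : ν ω ∈ spectrum ℝ (A ω)
    swap
    · exact Or.inr hspec
    left
    by_cases hBmem : ω ∈ B
    · exact Or.inr hBmem
    left
    have hF0 : (0:ℝ) ≤ ∑ i, ∑ j, (A ω i j) ^ 2 :=
      Finset.sum_nonneg fun i _ => Finset.sum_nonneg fun j _ => sq_nonneg _
    have hFle : (∑ i, ∑ j, (A ω i j) ^ 2) ≤ (ζ⁻¹) ^ 2 := by
      by_contra hcon
      push_neg at hcon
      apply hBmem
      show ζ ^ (-p) ≤ (∑ i, ∑ j, (A ω i j) ^ 2) ^ (p / 2)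
      have h2 : (((ζ⁻¹) ^ 2 : ℝ)) ^ (p / 2) ≤ (∑ i, ∑ j, (A ω i j) ^ 2) ^ (p / 2) :=
        Real.rpow_le_rpow (by positivity) hcon.le (by linarith)
      refine le_trans (le_of_eq ?_) h2
      rw [← Real.rpow_natCast (ζ⁻¹) 2, ← Real.rpow_mul (by positivity),
        Real.inv_rpow h0.le, ← Real.rpow_neg h0.le]
      norm_num
      congr 1
      ring
    obtain ⟨u, hu, hQu⟩ := aux_eig hspec
    obtain ⟨x, hxb, hxne, hxdist⟩ := aux_net h hh0 hhd hd u hu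
    have hxT : x ∈ T := by
      rw [hTdef, Fintype.mem_piFinset]
      intro i
      rw [Finset.mem_Icc]
      have h3 := abs_le.1 (hxb i)
      constructor
      · have : -((K:ℤ)) ≤ -((⌈1/h⌉₊ : ℤ) + 1) := by simp [hKdef]
        exact le_trans this h3.1
      · refine le_trans h3.2 ?_
        simp [hKdef]
    have hs_pos : 0 < ∑ j, (h * x j) ^ 2 :=
      (Finset.sum_nonneg fun j _ => sq_nonneg _).lt_of_ne (Ne.symm hxne)
    have hwunit : (∑ i, (w x) i ^ 2) = 1 := by
      have e : ∀ i, (w x) i ^ 2 = (∑ j, (h * x j) ^ 2)⁻¹ * (h * x i) ^ 2 := by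
        intro i
        show ((Real.sqrt (∑ j, (h * x j) ^ 2))⁻¹ * (h * x i)) ^ 2 = _
        rw [mul_pow, inv_pow, Real.sq_sqrt hs_pos.le]
      rw [Finset.sum_congr rfl fun i _ => e i, ← Finset.mul_sum,
        inv_mul_cancel₀ hs_pos.ne']
    refine Set.mem_biUnion hxT ?_
    refine ⟨hwunit, ?_⟩
    -- perturbation estimate
    set W : Fin d → ℝ := w x with hWdef
    set D : Fin d → ℝ := fun i => W i - u i with hDdef
    have hxdist' : ∑ i, D i ^ 2 ≤ (2 * h * d) ^ 2 := hxdist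
    have h2hd : 2 * h * (d:ℝ) = ζ ^ 2 := by
      rw [hhdef]
      field_simp
    have hDsum : ∑ i, D i ^ 2 ≤ (ζ ^ 2) ^ 2 := by rw [← h2hd]; exact hxdist'
    have hsqrtD : Real.sqrt (∑ i, D i ^ 2) ≤ ζ ^ 2 := by
      calc Real.sqrt (∑ i, D i ^ 2) ≤ Real.sqrt ((ζ ^ 2) ^ 2) := Real.sqrt_le_sqrt hDsum
        _ = ζ ^ 2 := Real.sqrt_sq (by positivity)
    have hsqrtF : Real.sqrt (∑ i, ∑ j, (A ω i j) ^ 2) ≤ ζ⁻¹ := by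
      calc Real.sqrt (∑ i, ∑ j, (A ω i j) ^ 2) ≤ Real.sqrt ((ζ⁻¹) ^ 2) :=
            Real.sqrt_le_sqrt hFle
        _ = ζ⁻¹ := Real.sqrt_sq (by positivity)
    have hsqrtW : Real.sqrt (∑ i, W i ^ 2) = 1 := by rw [hwunit, Real.sqrt_one]
    have hsqrtu : Real.sqrt (∑ i, u i ^ 2) = 1 := by rw [hu, Real.sqrt_one]
    have hD0 : (0:ℝ) ≤ Real.sqrt (∑ i, D i ^ 2) := Real.sqrt_nonneg _
    have hF0' : (0:ℝ) ≤ Real.sqrt (∑ i, ∑ j, (A ω i j) ^ 2) := Real.sqrt_nonneg _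
    have hb1 : |D ⬝ᵥ (A ω).mulVec W| ≤ ζ := by
      have hcs1 := aux_cs (A ω) D W
      rw [hsqrtW, mul_one] at hcs1
      calc |D ⬝ᵥ (A ω).mulVec W| ≤
            Real.sqrt (∑ i, D i ^ 2) * Real.sqrt (∑ i, ∑ j, (A ω i j) ^ 2) := hcs1
        _ ≤ ζ ^ 2 * ζ⁻¹ := mul_le_mul hsqrtD hsqrtF hF0' (by positivity)
        _ = ζ := by field_simp
    have hb2 : |u ⬝ᵥ (A ω).mulVec D| ≤ ζ := by
      have hcs2 := aux_cs (A ω) u D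
      rw [hsqrtu, one_mul] at hcs2
      calc |u ⬝ᵥ (A ω).mulVec D| ≤
            Real.sqrt (∑ i, ∑ j, (A ω i j) ^ 2) * Real.sqrt (∑ i, D i ^ 2) := hcs2
        _ ≤ ζ⁻¹ * ζ ^ 2 := mul_le_mul hsqrtF hsqrtD hD0 (by positivity)
        _ = ζ := by field_simp
    have hWu : W = u + D := by
      funext i
      simp only [hDdef, Pi.add_apply]
      ring
    have key : ∀ (a b : Fin d → ℝ), (a + b) ⬝ᵥ (A ω).mulVec (a + b) =
        a ⬝ᵥ (A ω).mulVec a + (b ⬝ᵥ (A ω).mulVec (a + b) + a ⬝ᵥ (A ω).mulVec b) := by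
      intro a b
      simp only [Matrix.mulVec_add, add_dotProduct, dotProduct_add]
      ring
    have hiden : W ⬝ᵥ (A ω).mulVec W =
        ν ω + (D ⬝ᵥ (A ω).mulVec W + u ⬝ᵥ (A ω).mulVec D) := by
      calc W ⬝ᵥ (A ω).mulVec W = (u + D) ⬝ᵥ (A ω).mulVec (u + D) := by rw [← hWu]
        _ = u ⬝ᵥ (A ω).mulVec u + (D ⬝ᵥ (A ω).mulVec (u + D) + u ⬝ᵥ (A ω).mulVec D) :=
            key u D
        _ = ν ω + (D ⬝ᵥ (A ω).mulVec W + u ⬝ᵥ (A ω).mulVec D) := by rw [← hWu, hQu]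
    show W ⬝ᵥ (A ω).mulVec W ≤ 4 * ζ
    rw [hiden]
    have l1 := (abs_le.1 hb1).2
    have l2 := (abs_le.1 hb2).2
    linarith
  -- Markov for B
  have hB_bound : (P B).toReal ≤ ζ ^ p * J := by
    have hm := mul_meas_ge_le_integral_of_nonneg (μ := P)
      (f := fun ω => (∑ i, ∑ j, (A ω i j) ^ 2) ^ (p / 2))
      (Filter.Eventually.of_forall fun ω => Real.rpow_nonneg
        (Finset.sum_nonneg fun i _ => Finset.sum_nonneg fun j _ => sq_nonneg _) _)
      hF (ζ ^ (-p))
    have hzp : (0:ℝ) < ζ ^ p := Real.rpow_pos_of_pos h0 p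
    rw [Real.rpow_neg h0.le] at hm
    rw [inv_mul_le_iff₀ hzp] at hm
    have hBeq : B = {x | (ζ ^ p)⁻¹ ≤ (∑ i, ∑ j, (A x i j) ^ 2) ^ (p / 2)} := by
      rw [hBdef]
      simp only [Real.rpow_neg h0.le]
    rw [hBeq]
    exact hm
  -- Markov for each Sx
  have hSx_bound : ∀ x, (P (Sx x)).toReal ≤ (4 * ζ) ^ q * S := by
    intro x
    have h4z : (0:ℝ) < 4 * ζ := by linarith
    have h4q : (0:ℝ) < (4 * ζ) ^ q := Real.rpow_pos_of_pos h4z q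
    by_cases hxu : (∑ i, (w x) i ^ 2) = 1
    · have hm := mul_meas_ge_le_integral_of_nonneg (μ := P)
        (f := fun ω => ((w x) ⬝ᵥ (A ω).mulVec (w x)) ^ (-q))
        ((hpos (w x) hxu).mono fun ω hω => Real.rpow_nonneg hω.le _)
        (hint (w x) hxu) ((4 * ζ) ^ (-q))
      have hIS : (∫ ω, ((w x) ⬝ᵥ (A ω).mulVec (w x)) ^ (-q) ∂P) ≤ S := by
        rw [hSdef]
        exact le_ciSup hbdd (⟨w x, hxu⟩ : {v : Fin d → ℝ // (∑ i, v i ^ 2) = 1})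
      have hsub2 : Sx x ⊆ {ω | ((4 * ζ) ^ q)⁻¹ ≤ ((w x) ⬝ᵥ (A ω).mulVec (w x)) ^ (-q)}
          ∪ {ω | ¬ 0 < (w x) ⬝ᵥ (A ω).mulVec (w x)} := by
        intro ω hω
        by_cases hq' : 0 < (w x) ⬝ᵥ (A ω).mulVec (w x)
        · left
          show ((4 * ζ) ^ q)⁻¹ ≤ _
          rw [← Real.rpow_neg h4z.le]
          exact Real.rpow_le_rpow_of_nonpos hq' hω.2 (by linarith)
        · right; exact hq'
      have hnull : P {ω | ¬ 0 < (w x) ⬝ᵥ (A ω).mulVec (w x)} = 0 := hpos (w x) hxu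
      have hmeasle : P (Sx x) ≤
          P {ω | ((4 * ζ) ^ q)⁻¹ ≤ ((w x) ⬝ᵥ (A ω).mulVec (w x)) ^ (-q)} := by
        calc P (Sx x) ≤ P ({ω | ((4 * ζ) ^ q)⁻¹ ≤ ((w x) ⬝ᵥ (A ω).mulVec (w x)) ^ (-q)}
              ∪ {ω | ¬ 0 < (w x) ⬝ᵥ (A ω).mulVec (w x)}) := measure_mono hsub2
          _ ≤ P {ω | ((4 * ζ) ^ q)⁻¹ ≤ ((w x) ⬝ᵥ (A ω).mulVec (w x)) ^ (-q)}
              + P {ω | ¬ 0 < (w x) ⬝ᵥ (A ω).mulVec (w x)} := measure_union_le _ _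
          _ = _ := by rw [hnull, add_zero]
      have htr : (P (Sx x)).toReal ≤
          (P {ω | ((4 * ζ) ^ q)⁻¹ ≤ ((w x) ⬝ᵥ (A ω).mulVec (w x)) ^ (-q)}).toReal :=
        ENNReal.toReal_mono (measure_ne_top P _) hmeasle
      rw [Real.rpow_neg h4z.le] at hm
      rw [inv_mul_le_iff₀ h4q] at hm
      calc (P (Sx x)).toReal ≤ _ := htr
        _ ≤ (4 * ζ) ^ q * ∫ ω, ((w x) ⬝ᵥ (A ω).mulVec (w x)) ^ (-q) ∂P := hm
        _ ≤ (4 * ζ) ^ q * S := mul_le_mul_of_nonneg_left hIS h4q.le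
    · have : Sx x = ∅ := by
        ext ω
        simp only [hSxdef, Set.mem_setOf_eq, Set.mem_empty_iff_false, iff_false]
        intro hc
        exact hxu hc.1
      rw [this]
      simp only [measure_empty, ENNReal.toReal_zero]
      positivity
  -- cardinality
  have hcard : (T.card : ℝ) * (ζ ^ 2) ^ d ≤ (14 * (d:ℝ)) ^ d := by
    have hc1 : T.card = (2 * K + 1) ^ d := by
      rw [hTdef, Fintype.card_piFinset]
      rw [Finset.prod_const, Finset.card_univ, Fintype.card_fin]
      congr 1
      rw [Int.card_Icc]
      simp only [sub_neg_eq_add]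
      omega
    have hKle : ((2 * K + 1 : ℕ) : ℝ) ≤ 7 / h := by
      have hceil : ((⌈1/h⌉₊ : ℕ) : ℝ) < 1/h + 1 := Nat.ceil_lt_add_one (by positivity)
      have h5 : (5:ℝ) ≤ 5 / h := by
        rw [le_div_iff₀ hh0]; linarith
      push_cast [hKdef]
      have : (2:ℝ) * (1/h + 1) + 3 ≤ 7/h := by
        have : (2:ℝ) / h + 5 ≤ 7 / h := by
          rw [div_add' _ _ _ hh0.ne', div_le_div_iff₀ hh0 hh0]
          nlinarith
        calc (2:ℝ) * (1/h + 1) + 3 = 2/h + 5 := by ring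
          _ ≤ 7/h := this
      linarith
    have hc2 : (T.card : ℝ) ≤ (7 / h) ^ d := by
      rw [hc1]
      push_cast
      apply pow_le_pow_left₀ (by positivity)
      exact_mod_cast hKle
    calc (T.card : ℝ) * (ζ ^ 2) ^ d ≤ (7 / h) ^ d * (ζ ^ 2) ^ d :=
          mul_le_mul_of_nonneg_right hc2 (by positivity)
      _ = ((7 / h) * ζ ^ 2) ^ d := (mul_pow _ _ _).symm
      _ = (14 * (d:ℝ)) ^ d := by
          congr 1
          rw [hhdef]
          field_simp
          ring
  -- combine measures
  have hcomb : (P {ω | ν ω ≤ ζ}).toReal ≤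
      (∑ x ∈ T, (P (Sx x)).toReal) + (P B).toReal := by
    have m1 : P {ω | ν ω ≤ ζ} ≤ (∑ x ∈ T, P (Sx x)) + P B := by
      calc P {ω | ν ω ≤ ζ} ≤ P (((⋃ x ∈ T, Sx x) ∪ B) ∪ N) := measure_mono hsub
        _ ≤ P ((⋃ x ∈ T, Sx x) ∪ B) + P N := measure_union_le _ _
        _ = P ((⋃ x ∈ T, Sx x) ∪ B) := by rw [hN, add_zero]
        _ ≤ P (⋃ x ∈ T, Sx x) + P B := measure_union_le _ _
        _ ≤ (∑ x ∈ T, P (Sx x)) + P B :=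
            add_le_add (measure_biUnion_finset_le T Sx) le_rfl
    have hsum_ne : (∑ x ∈ T, P (Sx x)) ≠ ⊤ :=
      (ENNReal.sum_lt_top.2 fun x _ => measure_lt_top P _).ne
    calc (P {ω | ν ω ≤ ζ}).toReal ≤ ((∑ x ∈ T, P (Sx x)) + P B).toReal :=
          ENNReal.toReal_mono (ENNReal.add_ne_top.2 ⟨hsum_ne, measure_ne_top P B⟩) m1
      _ = (∑ x ∈ T, P (Sx x)).toReal + (P B).toReal :=
          ENNReal.toReal_add hsum_ne (measure_ne_top P B)
      _ = (∑ x ∈ T, (P (Sx x)).toReal) + (P B).toReal := by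
          rw [ENNReal.toReal_sum fun x _ => measure_ne_top P _]
  -- final arithmetic
  have hJ0 : 0 ≤ J := by
    rw [hJdef]
    exact integral_nonneg fun ω => Real.rpow_nonneg
      (Finset.sum_nonneg fun i _ => Finset.sum_nonneg fun j _ => sq_nonneg _) _
  have hzp : (0:ℝ) < ζ ^ p := Real.rpow_pos_of_pos h0 p
  have h4q0 : (0:ℝ) ≤ (4:ℝ) ^ q := Real.rpow_nonneg (by norm_num) q
  have hz4 : (4 * ζ) ^ q = 4 ^ q * ζ ^ q := Real.mul_rpow (by norm_num) h0.le
  have hzq : ζ ^ q = ζ ^ p * (ζ ^ 2) ^ d := by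
    rw [hqp, Real.rpow_add h0]
    congr 1
    rw [show (2 * (d:ℝ)) = ((2 * d : ℕ) : ℝ) by push_cast; ring, Real.rpow_natCast,
      pow_mul]
  have hstep : ∑ x ∈ T, (P (Sx x)).toReal ≤ (T.card : ℝ) * ((4 * ζ) ^ q * S) := by
    calc ∑ x ∈ T, (P (Sx x)).toReal ≤ ∑ _x ∈ T, (4 * ζ) ^ q * S :=
          Finset.sum_le_sum fun x _ => hSx_bound x
      _ = (T.card : ℝ) * ((4 * ζ) ^ q * S) := by rw [Finset.sum_const, nsmul_eq_mul]
  have h6 : ∑ x ∈ T, (P (Sx x)).toReal ≤ (14 * (d:ℝ)) ^ d * 4 ^ q * S * ζ ^ p := by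
    have e1 : (T.card : ℝ) * ((4 * ζ) ^ q * S) =
        ((T.card : ℝ) * (ζ ^ 2) ^ d) * (4 ^ q * S * ζ ^ p) := by
      rw [hz4, hzq]; ring
    calc ∑ x ∈ T, (P (Sx x)).toReal ≤ _ := hstep
      _ = ((T.card : ℝ) * (ζ ^ 2) ^ d) * (4 ^ q * S * ζ ^ p) := e1
      _ ≤ (14 * (d:ℝ)) ^ d * (4 ^ q * S * ζ ^ p) :=
          mul_le_mul_of_nonneg_right hcard
            (mul_nonneg (mul_nonneg h4q0 hS0) hzp.le)
      _ = (14 * (d:ℝ)) ^ d * 4 ^ q * S * ζ ^ p := by ring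
  have ha0 : (0:ℝ) ≤ (14 * (d:ℝ)) ^ d * 4 ^ q := mul_nonneg (by positivity) h4q0
  calc (P {ω | ν ω ≤ ζ}).toReal ≤ (∑ x ∈ T, (P (Sx x)).toReal) + (P B).toReal := hcomb
    _ ≤ (14 * (d:ℝ)) ^ d * 4 ^ q * S * ζ ^ p + ζ ^ p * J := add_le_add h6 hB_bound
    _ ≤ ((14 * (d:ℝ)) ^ d * 4 ^ q + 1) * (S + J) * ζ ^ p := by
        nlinarith [mul_nonneg (mul_nonneg ha0 hJ0) hzp.le, mul_nonneg hS0 hzp.le,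
          mul_nonneg hJ0 hzp.le]

set_option maxHeartbeats 1000000 in
/-- Lemma 5.2: tail bound for the smallest eigenvalue `ν` of a random symmetric
positive semidefinite matrix `A`, with a constant depending only on `p` and `d`. -/
theorem smallest_eigenvalue_tail_bound (d : ℕ) (hd : 0 < d) (p : ℝ) (hp : 1 ≤ p) :
    ∃ C > 0,
      ∀ (Ω : Type) (mΩ : MeasurableSpace Ω) (P : Measure Ω),
        IsProbabilityMeasure P →
      ∀ A : Ω → Matrix (Fin d) (Fin d) ℝ, (∀ i j, Measurable fun ω => A ω i j) →
      (∀ᵐ ω ∂P, (A ω).IsSymm ∧ (A ω).PosSemidef) →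
      ∀ ν : Ω → ℝ, Measurable ν →
      -- `ν ω` is the smallest eigenvalue of `A ω`
      (∀ᵐ ω ∂P, ν ω ∈ spectrum ℝ (A ω) ∧ ∀ μ ∈ spectrum ℝ (A ω), ν ω ≤ μ) →
      -- the quadratic form is a.s. positive at every unit vector
      (∀ v : Fin d → ℝ, (∑ i, v i ^ 2) = 1 → ∀ᵐ ω ∂P, 0 < v ⬝ᵥ (A ω).mulVec v) →
      -- finiteness of the negative moments of the quadratic form
      (∀ v : Fin d → ℝ, (∑ i, v i ^ 2) = 1 →
        Integrable (fun ω => (v ⬝ᵥ (A ω).mulVec v) ^ (-(p + 2 * (d : ℝ)))) P) →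
      -- finiteness of the supremum over the unit sphere
      BddAbove (Set.range (fun v : {v : Fin d → ℝ // (∑ i, v i ^ 2) = 1} =>
        ∫ ω, ((v : Fin d → ℝ) ⬝ᵥ (A ω).mulVec (v : Fin d → ℝ)) ^ (-(p + 2 * (d : ℝ))) ∂P)) →
      -- finiteness of the moment of the Frobenius norm
      Integrable (fun ω => (∑ i, ∑ j, (A ω i j) ^ 2) ^ (p / 2)) P →
      ∀ ζ : ℝ, 0 ≤ ζ →
        (P {ω | ν ω ≤ ζ}).toReal ≤
          C * ((⨆ v : {v : Fin d → ℝ // (∑ i, v i ^ 2) = 1},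
                ∫ ω, ((v : Fin d → ℝ) ⬝ᵥ (A ω).mulVec (v : Fin d → ℝ)) ^
                  (-(p + 2 * (d : ℝ))) ∂P) +
              ∫ ω, (∑ i, ∑ j, (A ω i j) ^ 2) ^ (p / 2) ∂P) * ζ ^ p := by
  classical
  set C : ℝ := max 1 ((14 * d : ℝ) ^ d * 4 ^ (p + 2 * (d : ℝ)) + 1) with hCdef
  have hC1 : (1:ℝ) ≤ C := le_max_left _ _
  refine ⟨C, lt_of_lt_of_le one_pos hC1, ?_⟩
  intro Ω mΩ P hPP A hmeas hsymm ν hνmeas hν hpos hint hbdd hF ζ hζ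
  set q : ℝ := p + 2 * (d : ℝ) with hqdef
  set S : ℝ := ⨆ v : {v : Fin d → ℝ // (∑ i, v i ^ 2) = 1},
      ∫ ω, ((v : Fin d → ℝ) ⬝ᵥ (A ω).mulVec (v : Fin d → ℝ)) ^ (-q) ∂P with hSdef
  set J : ℝ := ∫ ω, (∑ i, ∑ j, (A ω i j) ^ 2) ^ (p / 2) ∂P with hJdef
  have hd1 : (1:ℝ) ≤ d := by exact_mod_cast hd
  have hq0 : (0:ℝ) < q := by rw [hqdef]; linarith
  -- a unit vector
  set u₀ : Fin d → ℝ := fun i => if i = ⟨0, hd⟩ then 1 else 0 with hu₀def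
  have hu₀ : ∑ i, u₀ i ^ 2 = 1 := by
    have e : ∀ i, u₀ i ^ 2 = if i = ⟨0, hd⟩ then 1 else 0 := by
      intro i
      by_cases hi : i = ⟨0, hd⟩ <;> simp [hu₀def, hi]
    rw [Finset.sum_congr rfl fun i _ => e i, Finset.sum_ite_eq' Finset.univ]
    simp
  have hν' : ∀ᵐ ω ∂P, ν ω ∈ spectrum ℝ (A ω) := hν.mono fun ω hω => hω.1
  have hJ0 : 0 ≤ J := integral_nonneg fun ω => Real.rpow_nonneg
    (Finset.sum_nonneg fun i _ => Finset.sum_nonneg fun j _ => sq_nonneg _) _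
  have hS0 : 0 ≤ S := by
    have h1 : (0:ℝ) ≤ ∫ ω, (u₀ ⬝ᵥ (A ω).mulVec u₀) ^ (-q) ∂P :=
      integral_nonneg_of_ae ((hpos u₀ hu₀).mono fun ω hω => Real.rpow_nonneg hω.le (-q))
    exact le_trans h1
      (le_ciSup hbdd (⟨u₀, hu₀⟩ : {v : Fin d → ℝ // (∑ i, v i ^ 2) = 1}))
  have hCge : (14 * d : ℝ) ^ d * 4 ^ q + 1 ≤ C := le_max_right _ _
  rcases eq_or_lt_of_le hζ with hz0 | hz0
  · -- ζ = 0
    rw [← hz0, Real.zero_rpow (by linarith : p ≠ 0), mul_zero]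
    set K0 : ℝ := C * (S + J) with hK0def
    have hK0 : 0 ≤ K0 := mul_nonneg (by linarith) (by linarith)
    have hb : ∀ ε : ℝ, 0 < ε → ε < 1 → (P {ω | ν ω ≤ 0}).toReal ≤ K0 * ε := by
      intro ε hε hε1
      have hmono : P {ω | ν ω ≤ 0} ≤ P {ω | ν ω ≤ ε} :=
        measure_mono fun ω hω => le_trans hω hε.le
      have hmain := aux_main hd hp P A ν hν' hpos hint hbdd hF hS0 ε hε hε1
      have hεp : ε ^ p ≤ ε := by
        calc ε ^ p ≤ ε ^ (1:ℝ) := Real.rpow_le_rpow_of_exponent_ge hε hε1.le hp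
          _ = ε := Real.rpow_one ε
      have hεp0 : 0 ≤ ε ^ p := Real.rpow_nonneg hε.le p
      calc (P {ω | ν ω ≤ 0}).toReal ≤ (P {ω | ν ω ≤ ε}).toReal :=
            ENNReal.toReal_mono (measure_ne_top _ _) hmono
        _ ≤ ((14 * d : ℝ) ^ d * 4 ^ q + 1) * (S + J) * ε ^ p := hmain
        _ ≤ C * (S + J) * ε ^ p := by
            apply mul_le_mul_of_nonneg_right _ hεp0
            exact mul_le_mul_of_nonneg_right hCge (by linarith)
        _ ≤ K0 * ε := by
            rw [hK0def]
            exact mul_le_mul_of_nonneg_left hεp (by positivity)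
    by_contra hcon
    push_neg at hcon
    have ha : 0 < (P {ω | ν ω ≤ 0}).toReal := lt_of_le_of_lt (by positivity) hcon
    set a : ℝ := (P {ω | ν ω ≤ 0}).toReal
    set ε : ℝ := min (1/2) (a / (2 * (K0 + 1))) with hεdef
    have hεpos : 0 < ε := lt_min (by norm_num) (by positivity)
    have hε1 : ε < 1 := lt_of_le_of_lt (min_le_left _ _) (by norm_num)
    have h2 := hb ε hεpos hε1
    have h3 : ε ≤ a / (2 * (K0 + 1)) := min_le_right _ _
    have h4 : K0 * ε ≤ K0 * (a / (2 * (K0 + 1))) :=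
      mul_le_mul_of_nonneg_left h3 hK0
    have h5 : K0 * (a / (2 * (K0 + 1))) < a := by
      rw [mul_div_assoc']
      rw [div_lt_iff₀ (by positivity)]
      nlinarith
    linarith
  · rcases lt_or_ge ζ 1 with hz1 | hz1
    · -- main case
      refine le_trans (aux_main hd hp P A ν hν' hpos hint hbdd hF hS0 ζ hz0 hz1) ?_
      apply mul_le_mul_of_nonneg_right _ (Real.rpow_nonneg hζ p)
      exact mul_le_mul_of_nonneg_right hCge (by linarith)
    · -- ζ ≥ 1
      have hP1 : (P {ω | ν ω ≤ ζ}).toReal ≤ 1 := by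
        have h1 : P {ω | ν ω ≤ ζ} ≤ P Set.univ := measure_mono (Set.subset_univ _)
        rw [measure_univ] at h1
        have := ENNReal.toReal_mono ENNReal.one_ne_top h1
        simpa using this
      have hSJ1 : 1 ≤ S + J := by
        have hpt : ∀ᵐ ω ∂P, (1:ℝ) ≤ (u₀ ⬝ᵥ (A ω).mulVec u₀) ^ (-q)
            + (∑ i, ∑ j, (A ω i j) ^ 2) ^ (p / 2) := by
          refine (hpos u₀ hu₀).mono fun ω hQ => ?_
          have hFnn : (0:ℝ) ≤ ∑ i, ∑ j, (A ω i j) ^ 2 :=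
            Finset.sum_nonneg fun i _ => Finset.sum_nonneg fun j _ => sq_nonneg _
          by_cases hc : u₀ ⬝ᵥ (A ω).mulVec u₀ ≤ 1
          · have h1' : (1:ℝ) ≤ (u₀ ⬝ᵥ (A ω).mulVec u₀) ^ (-q) :=
              Real.one_le_rpow_of_pos_of_le_one_of_nonpos hQ hc (by linarith)
            have h2' : (0:ℝ) ≤ (∑ i, ∑ j, (A ω i j) ^ 2) ^ (p / 2) :=
              Real.rpow_nonneg hFnn _
            linarith
          · push_neg at hc
            have habs := aux_cs (A ω) u₀ u₀
            rw [hu₀, Real.sqrt_one, one_mul, mul_one] at habs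
            have hF1 : (1:ℝ) ≤ ∑ i, ∑ j, (A ω i j) ^ 2 := by
              have h6 : (1:ℝ) < Real.sqrt (∑ i, ∑ j, (A ω i j) ^ 2) :=
                lt_of_lt_of_le hc (le_trans (le_abs_self _) habs)
              nlinarith [Real.sq_sqrt hFnn, Real.sqrt_nonneg (∑ i, ∑ j, (A ω i j) ^ 2)]
            have h2' : (1:ℝ) ≤ (∑ i, ∑ j, (A ω i j) ^ 2) ^ (p / 2) :=
              Real.one_le_rpow hF1 (by linarith)
            have h1' : (0:ℝ) ≤ (u₀ ⬝ᵥ (A ω).mulVec u₀) ^ (-q) :=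
              Real.rpow_nonneg hQ.le _
            linarith
        have hintadd : Integrable (fun ω => (u₀ ⬝ᵥ (A ω).mulVec u₀) ^ (-q)
            + (∑ i, ∑ j, (A ω i j) ^ 2) ^ (p / 2)) P := (hint u₀ hu₀).add hF
        have hmono := integral_mono_ae (integrable_const (1:ℝ)) hintadd hpt
        rw [integral_const] at hmono
        simp only [measure_univ, probReal_univ, smul_eq_mul, one_mul] at hmono
        rw [integral_add (hint u₀ hu₀) hF] at hmono
        have hIS : (∫ ω, (u₀ ⬝ᵥ (A ω).mulVec u₀) ^ (-q) ∂P) ≤ S :=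
          le_ciSup hbdd (⟨u₀, hu₀⟩ : {v : Fin d → ℝ // (∑ i, v i ^ 2) = 1})
        rw [hJdef]
        linarith [hmono]
      have hz : (1:ℝ) ≤ ζ ^ p := Real.one_le_rpow hz1 (by linarith)
      have hCS : (1:ℝ) ≤ C * (S + J) := by nlinarith
      have hfin : (1:ℝ) ≤ (C * (S + J)) * ζ ^ p := by nlinarith
      calc (P {ω | ν ω ≤ ζ}).toReal ≤ 1 := hP1
        _ ≤ C * (S + J) * ζ ^ p := hfin
end

section
/- Let M be a symmetric positive definite d×d real matrix. Then there exist constants C > 0 and c₁ > 0 such that for all x, w ∈ ℝ^d: |e^{−(1/2)xᵀMx} − e^{−(1/2)wᵀMw}| ≤ C·max(e^{−c₁|x|²}, e^{−c₁|w|²})·(|x−w| + |x−w|²). -/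
open Matrix

-- exp difference lemma
lemma exp_diff_le' (a b : ℝ) :
    |Real.exp (-a) - Real.exp (-b)| ≤ max (Real.exp (-a)) (Real.exp (-b)) * |a - b| := by
  wlog h : a ≤ b generalizing a b
  · rw [abs_sub_comm, max_comm, abs_sub_comm a b]; exact this b a (le_of_not_ge h)
  have h1 : Real.exp (-b) ≤ Real.exp (-a) := Real.exp_le_exp.2 (by linarith)
  rw [abs_of_nonneg (by linarith), max_eq_left h1, abs_of_nonpos (by linarith)]
  have h3 : Real.exp (-b) = Real.exp (-a) * Real.exp (-(b - a)) := by
    rw [← Real.exp_add]; ring_nf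
  have h2 : 1 - (b - a) ≤ Real.exp (-(b - a)) := by
    have := Real.add_one_le_exp (-(b - a)); linarith
  rw [h3]
  nlinarith [Real.exp_pos (-a)]

-- t * exp(-(c t^2)) bounded
lemma texp_le (c t : ℝ) (hc : 0 < c) (ht : 0 ≤ t) :
    t * Real.exp (-(c * t ^ 2)) ≤ 1 / (2 * Real.sqrt c) := by
  have hs : 0 < Real.sqrt c := Real.sqrt_pos.2 hc
  have h1 : 2 * Real.sqrt c * t ≤ Real.exp (c * t ^ 2) := by
    nlinarith [Real.add_one_le_exp (c * t ^ 2), sq_nonneg (1 - Real.sqrt c * t),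
      Real.sq_sqrt hc.le]
  rw [Real.exp_neg, ← div_eq_mul_inv, div_le_div_iff₀ (Real.exp_pos _) (by positivity)]
  nlinarith

lemma posdef_lower (d : ℕ) (M : Matrix (Fin d) (Fin d) ℝ) (hM : M.PosDef) :
    ∃ μ > 0, ∀ v : Fin d → ℝ, μ * ∑ i, v i ^ 2 ≤ v ⬝ᵥ M.mulVec v := by
  rcases Nat.eq_zero_or_pos d with hd | hd
  · refine ⟨1, one_pos, fun v => ?_⟩
    subst hd
    simp [dotProduct]
  · set S : Set (Fin d → ℝ) := {v | ∑ i, v i ^ 2 = 1} with hS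
    have hne : S.Nonempty := by
      refine ⟨Pi.single ⟨0, hd⟩ 1, ?_⟩
      simp [hS, Pi.single_apply, Finset.sum_ite_eq']
    have hcont : Continuous fun v : Fin d → ℝ => v ⬝ᵥ M.mulVec v := by
      simp only [dotProduct, Matrix.mulVec]
      fun_prop
    have hclosed : IsClosed S := by
      have : Continuous fun v : Fin d → ℝ => ∑ i, v i ^ 2 := by fun_prop
      exact isClosed_eq this continuous_const
    have hbdd : Bornology.IsBounded S := by
      apply Bornology.IsBounded.subset (Metric.isBounded_closedBall (x := (0 : Fin d → ℝ)) (r := 1))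
      intro v hv
      simp only [Metric.mem_closedBall, dist_zero_right]
      rw [pi_norm_le_iff_of_nonneg zero_le_one]
      intro i
      have h1 : v i ^ 2 ≤ 1 := by
        rw [← hv]
        exact Finset.single_le_sum (fun j _ => sq_nonneg (v j)) (Finset.mem_univ i)
      rw [Real.norm_eq_abs, ← Real.sqrt_one, ← Real.sqrt_sq_eq_abs]
      exact Real.sqrt_le_sqrt h1
    have hcompact : IsCompact S := Metric.isCompact_of_isClosed_isBounded hclosed hbdd
    obtain ⟨v₀, hv₀S, hmin⟩ := hcompact.exists_isMinOn hne hcont.continuousOn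
    have hv₀ne : v₀ ≠ 0 := by
      intro h
      rw [h] at hv₀S
      simp [hS] at hv₀S
    set μ := v₀ ⬝ᵥ M.mulVec v₀ with hμ
    have hμpos : 0 < μ := hM.dotProduct_mulVec_pos hv₀ne |>.trans_eq (by simp [hμ])
    refine ⟨μ, hμpos, fun v => ?_⟩
    by_cases hv : ∑ i, v i ^ 2 = 0
    · have hv0 : v = 0 := by
        funext i
        have := (Finset.sum_eq_zero_iff_of_nonneg (fun j _ => sq_nonneg (v j))).1 hv i (Finset.mem_univ i)
        exact pow_eq_zero_iff (by norm_num) |>.1 this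
      subst hv0
      simp [hv]
    · have hvpos : 0 < ∑ i, v i ^ 2 := lt_of_le_of_ne (Finset.sum_nonneg fun j _ => sq_nonneg _) (Ne.symm hv)
      set t := Real.sqrt (∑ i, v i ^ 2) with htd
      have htpos : 0 < t := Real.sqrt_pos.2 hvpos
      have ht2 : t ^ 2 = ∑ i, v i ^ 2 := Real.sq_sqrt hvpos.le
      have hu : (t⁻¹ • v) ∈ S := by
        simp only [hS, Set.mem_setOf_eq, Pi.smul_apply, smul_eq_mul, mul_pow, ← Finset.mul_sum]
        field_simp [ht2]
        exact ht2.symm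
      have h2 : μ ≤ (t⁻¹ • v) ⬝ᵥ M.mulVec (t⁻¹ • v) := hmin hu
      have hq : (t⁻¹ • v) ⬝ᵥ M.mulVec (t⁻¹ • v) = t⁻¹ ^ 2 * (v ⬝ᵥ M.mulVec v) := by
        rw [Matrix.mulVec_smul, dotProduct_smul, smul_dotProduct]
        simp [smul_eq_mul]; ring
      rw [hq] at h2
      have := mul_le_mul_of_nonneg_left h2 (sq_nonneg t)
      have htne : t ≠ 0 := htpos.ne'
      calc μ * ∑ i, v i ^ 2 = t ^ 2 * μ := by rw [ht2]; ring
        _ ≤ t ^ 2 * (t⁻¹ ^ 2 * (v ⬝ᵥ M.mulVec v)) := this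
        _ = v ⬝ᵥ M.mulVec v := by field_simp

lemma dot_abs_le (d : ℕ) (M : Matrix (Fin d) (Fin d) ℝ) (v u : Fin d → ℝ) :
    |v ⬝ᵥ M.mulVec u| ≤ (∑ i, ∑ j, |M i j|) *
      (Real.sqrt (∑ i, v i ^ 2) * Real.sqrt (∑ i, u i ^ 2)) := by
  have key : ∀ (z : Fin d → ℝ) (i : Fin d), |z i| ≤ Real.sqrt (∑ j, z j ^ 2) := fun z i => by
    rw [← Real.sqrt_sq_eq_abs]
    exact Real.sqrt_le_sqrt (Finset.single_le_sum (fun j _ => sq_nonneg (z j)) (Finset.mem_univ i))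
  have hnn : ∀ z : Fin d → ℝ, 0 ≤ Real.sqrt (∑ j, z j ^ 2) := fun z => Real.sqrt_nonneg _
  simp only [dotProduct, Matrix.mulVec]
  calc |∑ i, v i * ∑ j, M i j * u j| ≤ ∑ i, |v i * ∑ j, M i j * u j| :=
        Finset.abs_sum_le_sum_abs _ _
    _ ≤ ∑ i, ∑ j, |v i| * (|M i j| * |u j|) := by
        apply Finset.sum_le_sum; intro i _
        rw [abs_mul, ← Finset.mul_sum]
        apply mul_le_mul_of_nonneg_left _ (abs_nonneg (v i))
        calc |∑ j, M i j * u j| ≤ ∑ j, |M i j * u j| := Finset.abs_sum_le_sum_abs _ _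
          _ = ∑ j, |M i j| * |u j| := by simp [abs_mul]
    _ ≤ ∑ i, ∑ j, |M i j| * (Real.sqrt (∑ k, v k ^ 2) * Real.sqrt (∑ k, u k ^ 2)) := by
        apply Finset.sum_le_sum; intro i _
        apply Finset.sum_le_sum; intro j _
        have h1 := key v i
        have h2 := key u j
        have := abs_nonneg (v i); have := abs_nonneg (u j); have := abs_nonneg (M i j)
        nlinarith [hnn v, hnn u, mul_le_mul h1 h2 (abs_nonneg (u j)) (hnn v), mul_le_mul_of_nonneg_left (mul_le_mul h1 h2 (abs_nonneg (u j)) (hnn v)) (abs_nonneg (M i j))]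
    _ = (∑ i, ∑ j, |M i j|) * (Real.sqrt (∑ i, v i ^ 2) * Real.sqrt (∑ i, u i ^ 2)) := by
        simp [Finset.sum_mul]

lemma arith1 (A Nd Nx Nw : ℝ) (hA : 0 ≤ A) (h0 : 0 ≤ Nd) (h1 : 0 ≤ Nx) (h2 : 0 ≤ Nw) :
    A * (Nd * Nx) + A * (Nw * Nd) ≤ (A + 1) * Nd * (Nx + Nw) := by nlinarith

lemma arith2 (K B E Nd Nx Nw D : ℝ) (hK : 0 < K) (hB : 0 < B) (hE0 : 0 < E) (hE1 : E ≤ 1)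
    (hEB : E * Nx ≤ B) (hNd0 : 0 ≤ Nd) (hNx0 : 0 ≤ Nx) (hNw0 : 0 ≤ Nw)
    (hNw : Nw ≤ Nx + Nd) (hNd2 : Nd ^ 2 = D) :
    E * E * (1 / 2 * (K * Nd * (Nx + Nw))) ≤ K * (B + 1) * E * (Nd + D) := by
  have hD0 : 0 ≤ D := hNd2 ▸ sq_nonneg Nd
  have ht1 : E * E * (Nd * Nx) ≤ B * Nd := by
    have a1 := mul_le_mul_of_nonneg_right hEB (mul_nonneg hE0.le hNd0)
    have a2 := mul_le_mul_of_nonneg_left (mul_le_of_le_one_left hNd0 hE1) hB.le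
    nlinarith
  have ht2 : E * E * (Nd * Nd) ≤ E * D := by
    have a3 : E * E * D ≤ E * D := by nlinarith [mul_le_mul_of_nonneg_right (mul_le_mul_of_nonneg_left hE1 hE0.le) hD0]
    have a4 : Nd * Nd = D := by nlinarith
    rw [a4]; exact a3
  have ht3 : E * E * (Nd * Nw) ≤ E * E * (Nd * (Nx + Nd)) := by
    have := mul_le_mul_of_nonneg_left hNw hNd0
    nlinarith [mul_pos hE0 hE0]
  have hKp := hK.le
  nlinarith [mul_le_mul_of_nonneg_left ht1 hKp, mul_le_mul_of_nonneg_left ht2 hKp,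
    mul_le_mul_of_nonneg_left ht3 hKp, mul_nonneg (mul_nonneg hKp hE0.le) hNd0,
    mul_nonneg (mul_nonneg hKp hE0.le) hD0, mul_nonneg (mul_nonneg hKp hB.le) hNd0]

/-- Gaussian-density difference estimate (display (3.8) of the paper): for a symmetric
positive definite matrix `M`, the difference of the Gaussian kernels at `x` and `w` is
controlled by a Gaussian factor times `|x - w| + |x - w|²`. -/
theorem gaussian_kernel_difference_estimate (d : ℕ)
    (M : Matrix (Fin d) (Fin d) ℝ) (hsymm : M.IsSymm) (hM : M.PosDef) :
    ∃ C > 0, ∃ c₁ > 0, ∀ x w : Fin d → ℝ,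
      |Real.exp (-(1 / 2) * (x ⬝ᵥ M.mulVec x)) -
          Real.exp (-(1 / 2) * (w ⬝ᵥ M.mulVec w))| ≤
        C * max (Real.exp (-c₁ * ∑ i, x i ^ 2)) (Real.exp (-c₁ * ∑ i, w i ^ 2)) *
          (Real.sqrt (∑ i, (x i - w i) ^ 2) + ∑ i, (x i - w i) ^ 2) := by
  obtain ⟨μ, hμ, hlow⟩ := posdef_lower d M hM
  set A : ℝ := ∑ i, ∑ j, |M i j| with hAdef
  have hKsum : (0:ℝ) ≤ A :=
    Finset.sum_nonneg fun i _ => Finset.sum_nonneg fun j _ => abs_nonneg _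
  set K : ℝ := A + 1 with hKdef
  have hK0 : 0 < K := by positivity
  have hc₁ : 0 < μ / 4 := by positivity
  set B : ℝ := 1 / (2 * Real.sqrt (μ / 4)) with hBdef
  have hB0 : 0 < B := by positivity
  refine ⟨K * (B + 1), by positivity, μ / 4, hc₁, ?_⟩
  have key : ∀ x w : Fin d → ℝ, (∑ i, x i ^ 2) ≤ (∑ i, w i ^ 2) →
      |Real.exp (-(1 / 2) * (x ⬝ᵥ M.mulVec x)) -
          Real.exp (-(1 / 2) * (w ⬝ᵥ M.mulVec w))| ≤
        K * (B + 1) * max (Real.exp (-(μ / 4) * ∑ i, x i ^ 2)) (Real.exp (-(μ / 4) * ∑ i, w i ^ 2)) *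
          (Real.sqrt (∑ i, (x i - w i) ^ 2) + ∑ i, (x i - w i) ^ 2) := by
    intro x w hle
    set Sx := ∑ i, x i ^ 2 with hSx
    set Sw := ∑ i, w i ^ 2 with hSw
    set D := ∑ i, (x i - w i) ^ 2 with hD
    have hSx0 : 0 ≤ Sx := Finset.sum_nonneg fun i _ => sq_nonneg _
    have hSw0 : 0 ≤ Sw := Finset.sum_nonneg fun i _ => sq_nonneg _
    have hD0 : 0 ≤ D := Finset.sum_nonneg fun i _ => sq_nonneg _
    set Nx := Real.sqrt Sx with hNx
    set Nw := Real.sqrt Sw with hNw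
    set Nd := Real.sqrt D with hNd
    have hNx0 : 0 ≤ Nx := Real.sqrt_nonneg _
    have hNw0 : 0 ≤ Nw := Real.sqrt_nonneg _
    have hNd0 : 0 ≤ Nd := Real.sqrt_nonneg _
    have hNx2 : Nx ^ 2 = Sx := Real.sq_sqrt hSx0
    have hNd2 : Nd ^ 2 = D := Real.sq_sqrt hD0
    set qx := x ⬝ᵥ M.mulVec x with hqx
    set qw := w ⬝ᵥ M.mulVec w with hqw
    -- step 1: exp difference
    have step1 : |Real.exp (-(1 / 2) * qx) - Real.exp (-(1 / 2) * qw)| ≤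
        max (Real.exp (-(1 / 2) * qx)) (Real.exp (-(1 / 2) * qw)) * |1 / 2 * qx - 1 / 2 * qw| := by
      have := exp_diff_le' (1 / 2 * qx) (1 / 2 * qw)
      simpa [neg_mul] using this
    -- step 2: gaussian factor
    set E := Real.exp (-(μ / 4 * Sx)) with hE
    have hE0 : 0 < E := Real.exp_pos _
    have hE1 : E ≤ 1 := Real.exp_le_one_iff.2 (by nlinarith [mul_nonneg hμ.le hSx0])
    have hx : μ * Sx ≤ qx := hlow x
    have hw : μ * Sw ≤ qw := hlow w
    have hμSw : μ * Sx ≤ μ * Sw := mul_le_mul_of_nonneg_left hle hμ.le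
    have step2 : max (Real.exp (-(1 / 2) * qx)) (Real.exp (-(1 / 2) * qw)) ≤ E * E := by
      rw [hE, ← Real.exp_add]
      apply max_le <;> apply Real.exp_le_exp.2 <;> linarith
    -- step 3: quadratic form difference
    have hsplit : qx - qw = (x - w) ⬝ᵥ M.mulVec x + w ⬝ᵥ M.mulVec (x - w) := by
      rw [hqx, hqw]
      simp only [sub_dotProduct, Matrix.mulVec_sub, dotProduct_sub]
      ring
    have hsub : ∀ i, (x - w) i ^ 2 = (x i - w i) ^ 2 := fun i => by simp [Pi.sub_apply]
    have hsubsum : (∑ i, (x - w) i ^ 2) = D := Finset.sum_congr rfl fun i _ => hsub i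
    have h1 := dot_abs_le d M (x - w) x
    have h2 := dot_abs_le d M w (x - w)
    rw [hsubsum] at h1 h2
    have step3 : |qx - qw| ≤ K * Nd * (Nx + Nw) := by
      rw [hsplit]
      calc |(x - w) ⬝ᵥ M.mulVec x + w ⬝ᵥ M.mulVec (x - w)| ≤
            |(x - w) ⬝ᵥ M.mulVec x| + |w ⬝ᵥ M.mulVec (x - w)| := abs_add_le _ _
        _ ≤ A * (Nd * Nx) + A * (Nw * Nd) := add_le_add h1 h2
        _ ≤ (A + 1) * Nd * (Nx + Nw) := arith1 A Nd Nx Nw hKsum hNd0 hNx0 hNw0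
        _ = K * Nd * (Nx + Nw) := by rw [hKdef]
    -- Nw ≤ Nx + Nd
    have hcs := Real.sum_mul_le_sqrt_mul_sqrt Finset.univ (fun i => -(x i)) (fun i => x i - w i)
    simp only [neg_mul, neg_sq, Finset.sum_neg_distrib] at hcs
    have hcs' : -∑ i, x i * (x i - w i) ≤ Nx * Nd := by
      rw [hNx, hNd, hSx, hD]; convert hcs using 3 <;> simp
    have hSwexp : Sw = Sx - 2 * ∑ i, x i * (x i - w i) + D := by
      rw [hSw]
      calc (∑ i, w i ^ 2) = ∑ i, (x i ^ 2 - 2 * (x i * (x i - w i)) + (x i - w i) ^ 2) :=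
            Finset.sum_congr rfl fun i _ => by ring
        _ = Sx - 2 * (∑ i, x i * (x i - w i)) + D := by
            rw [Finset.sum_add_distrib, Finset.sum_sub_distrib, ← Finset.mul_sum, hSx, hD]
    -- texp bound
    have hEB : E * Nx ≤ B := by
      have := texp_le (μ / 4) Nx hc₁ hNx0
      rw [hNx2] at this
      rw [hBdef, hE]; linarith
    -- max on RHS
    have hmaxr : max (Real.exp (-(μ / 4) * Sx)) (Real.exp (-(μ / 4) * Sw)) = E := by
      rw [hE, neg_mul]
      exact max_eq_left (Real.exp_le_exp.2 (by linarith [hμSw]))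
    rw [hmaxr]
    set P := ∑ i, x i * (x i - w i) with hP
    clear_value A K B Sx Sw D Nx Nw Nd qx qw E P
    have hNwle : Nw ≤ Nx + Nd := by
      rw [← Real.sqrt_sq (by positivity : (0:ℝ) ≤ Nx + Nd), hNw]
      apply Real.sqrt_le_sqrt
      linarith only [hcs', hSwexp, hNx2, hNd2, sq_nonneg (Nx + Nd)]
    -- combine
    have habs : |1 / 2 * qx - 1 / 2 * qw| = (1 / 2) * |qx - qw| := by
      rw [show 1 / 2 * qx - 1 / 2 * qw = 1 / 2 * (qx - qw) by ring, abs_mul]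
      norm_num
    calc |Real.exp (-(1 / 2) * qx) - Real.exp (-(1 / 2) * qw)| ≤
          max (Real.exp (-(1 / 2) * qx)) (Real.exp (-(1 / 2) * qw)) * |1 / 2 * qx - 1 / 2 * qw| :=
          step1
      _ ≤ (E * E) * (1 / 2 * (K * Nd * (Nx + Nw))) := by
          rw [habs]
          exact mul_le_mul step2 (by linarith only [step3]) (by positivity)
            (mul_nonneg hE0.le hE0.le)
      _ ≤ K * (B + 1) * E * (Nd + D) :=
          arith2 K B E Nd Nx Nw D hK0 hB0 hE0 hE1 hEB hNd0 hNx0 hNw0 hNwle hNd2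
  intro x w
  rcases le_total (∑ i, x i ^ 2) (∑ i, w i ^ 2) with h | h
  · exact key x w h
  · have := key w x h
    rw [abs_sub_comm, max_comm]
    have hsym : (∑ i, (x i - w i) ^ 2) = ∑ i, (w i - x i) ^ 2 :=
      Finset.sum_congr rfl fun i _ => by ring
    rw [hsym]
    exact this
end

section
/- Let d ≤ n be positive integers, λ₁,…,λ_d > 0, σ a real d×n matrix of rank d, and for t ∈ (0,∞] let C_t be the d×d matrix with entries C_t^{jk} = Σ_{l=1}^n σ^j_l σ^k_l (1 − e^{−(λ_j+λ_k)t})/(λ_j+λ_k), with C₀ := C_∞. Then there exist constants C, q, t₀ > 0 such that for all T ≥ t₀: (i) ‖C_T − C₀‖_F ≤ C e^{−qT}; (ii) C_T and C₀ are invertible and ‖C_T^{−1} − C₀^{−1}‖_F ≤ C e^{−qT}; and (iii) |1 − √(det C_T / det C₀)| ≤ C e^{−qT}. -/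
open Matrix

/-- Covariance matrix `C_t` of the Gaussian process, for finite `t`. -/
noncomputable def covT {d n : ℕ} (lam : Fin d → ℝ) (σ : Matrix (Fin d) (Fin n) ℝ)
    (t : ℝ) : Matrix (Fin d) (Fin d) ℝ :=
  Matrix.of fun j k =>
    ∑ l, σ j l * σ k l * (1 - Real.exp (-(lam j + lam k) * t)) / (lam j + lam k)

/-- Limiting covariance matrix `C₀ = C_∞`. -/
noncomputable def covInf {d n : ℕ} (lam : Fin d → ℝ) (σ : Matrix (Fin d) (Fin n) ℝ) :
    Matrix (Fin d) (Fin d) ℝ :=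
  Matrix.of fun j k => ∑ l, σ j l * σ k l / (lam j + lam k)



open Real Filter Asymptotics MeasureTheory Set

lemma sqrt_sum_sq_le' {ι : Type*} [Fintype ι] (f : ι → ℝ) :
    Real.sqrt (∑ i, f i ^ 2) ≤ ∑ i, |f i| := by
  have h : (∑ i, f i ^ 2) ≤ (∑ i, |f i|) ^ 2 := by
    rw [sq, Finset.sum_mul_sum]
    calc ∑ i, f i ^ 2 = ∑ i, |f i| * |f i| := by
          simp [sq_abs, sq]
      _ ≤ ∑ i, ∑ j, |f i| * |f j| := by
          refine Finset.sum_le_sum fun i _ => ?_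
          have := Finset.single_le_sum (f := fun j => |f j|) (fun j _ => abs_nonneg _)
            (Finset.mem_univ i)
          calc |f i| * |f i| ≤ |f i| * ∑ j, |f j| :=
                mul_le_mul_of_nonneg_left this (abs_nonneg _)
            _ = ∑ j, |f i| * |f j| := by rw [Finset.mul_sum]
  calc Real.sqrt (∑ i, f i ^ 2) ≤ Real.sqrt ((∑ i, |f i|) ^ 2) := Real.sqrt_le_sqrt h
    _ = ∑ i, |f i| := Real.sqrt_sq (by positivity)

lemma abs_one_sub_sqrt_le' (r : ℝ) : |1 - Real.sqrt r| ≤ |1 - r| := by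
  rcases le_or_gt r 0 with h | h
  · rw [Real.sqrt_eq_zero'.mpr h, sub_zero, abs_one, abs_of_nonneg (by linarith)]
    linarith
  · have hr : 0 ≤ r := h.le
    have h1 : (1 - Real.sqrt r) * (1 + Real.sqrt r) = 1 - r := by
      have := Real.sq_sqrt hr; nlinarith
    have h2 : (0:ℝ) ≤ 1 + Real.sqrt r := by positivity
    calc |1 - Real.sqrt r| ≤ |1 - Real.sqrt r| * (1 + Real.sqrt r) := by
          nlinarith [abs_nonneg (1 - Real.sqrt r), Real.sqrt_nonneg r]
      _ = |(1 - Real.sqrt r) * (1 + Real.sqrt r)| := by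
          rw [abs_mul, abs_of_nonneg h2]
      _ = |1 - r| := by rw [h1]

lemma sqrt_sum_sum_sq_le {ι κ : Type*} [Fintype ι] [Fintype κ] (f : ι → κ → ℝ) :
    Real.sqrt (∑ j, ∑ k, f j k ^ 2) ≤ ∑ j, ∑ k, |f j k| := by
  have h := sqrt_sum_sq_le' (ι := ι × κ) (fun p => f p.1 p.2)
  simpa [Fintype.sum_prod_type] using h

lemma integral_exp_neg_mul_Ioi_zero' {a : ℝ} (ha : 0 < a) :
    ∫ s in Ioi (0:ℝ), Real.exp (-a * s) = 1 / a := by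
  have hderiv : ∀ x ∈ Ici (0:ℝ),
      HasDerivAt (fun s => -Real.exp (-a * s) / a) (Real.exp (-a * x)) x := by
    intro x _
    have h1 : HasDerivAt (fun s : ℝ => -a * s) (-a) x := by
      simpa using (hasDerivAt_id x).const_mul (-a)
    have h2 : HasDerivAt (fun s : ℝ => Real.exp (-a * s)) (Real.exp (-a * x) * (-a)) x :=
      (Real.hasDerivAt_exp (-a * x)).comp x h1
    have h3 := (h2.div_const a).neg
    have h4 := h3.congr_deriv (show -(Real.exp (-a * x) * -a / a) = Real.exp (-a * x) by
      rw [mul_neg, neg_div, neg_neg, mul_div_cancel_right₀ _ ha.ne'])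
    refine h4.congr_of_eventuallyEq (Filter.Eventually.of_forall fun s => ?_)
    simp [neg_div]
  have htend : Tendsto (fun s => -Real.exp (-a * s) / a) atTop (nhds 0) := by
    have h0 : Tendsto (fun s : ℝ => -a * s) atTop atBot :=
      Tendsto.const_mul_atTop_of_neg (by linarith) tendsto_id
    have h1 : Tendsto (fun s : ℝ => Real.exp (-a * s)) atTop (nhds 0) :=
      Real.tendsto_exp_atBot.comp h0
    simpa using (h1.neg).div_const a
  rw [integral_Ioi_of_hasDerivAt_of_tendsto' hderiv (exp_neg_integrableOn_Ioi 0 ha) htend]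
  have ha' : a ≠ 0 := ha.ne'
  field_simp
  simp

lemma vecMul_ne_zero' {d n : ℕ} (σ : Matrix (Fin d) (Fin n) ℝ) (hrank : σ.rank = d)
    {x : Fin d → ℝ} (hx : x ≠ 0) : x ᵥ* σ ≠ 0 := by
  intro h0
  have hrt : σᵀ.rank = d := by rw [Matrix.rank_transpose]; exact hrank
  have hd : Module.finrank ℝ (LinearMap.range σᵀ.mulVecLin) = d := hrt
  have hrn := LinearMap.finrank_range_add_finrank_ker σᵀ.mulVecLin
  rw [hd] at hrn
  have hdom : Module.finrank ℝ (Fin d → ℝ) = d := by simp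
  rw [hdom] at hrn
  have hker : Module.finrank ℝ (LinearMap.ker σᵀ.mulVecLin) = 0 := by omega
  have hbot : LinearMap.ker σᵀ.mulVecLin = ⊥ := Submodule.finrank_eq_zero.mp hker
  have hxker : x ∈ LinearMap.ker σᵀ.mulVecLin := by
    simp only [LinearMap.mem_ker, Matrix.mulVecLin_apply]
    rw [Matrix.mulVec_transpose]
    exact h0
  rw [hbot] at hxker
  exact hx (by simpa using hxker)

lemma covInf_posDef' {d n : ℕ} (lam : Fin d → ℝ) (hpos : ∀ i, 0 < lam i)
    (σ : Matrix (Fin d) (Fin n) ℝ) (hrank : σ.rank = d) :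
    (covInf lam σ).PosDef := by
  have hlam : ∀ j k : Fin d, 0 < lam j + lam k := fun j k => add_pos (hpos j) (hpos k)
  rw [Matrix.posDef_iff_dotProduct_mulVec]
  constructor
  · ext j k
    simp only [conjTranspose_apply, star_trivial, covInf, Matrix.of_apply]
    exact Finset.sum_congr rfl fun l _ => by rw [mul_comm (σ k l), add_comm (lam k)]
  · intro x hx
    simp only [star_trivial]
    set g : Fin n → ℝ → ℝ := fun l s => ∑ j, x j * σ j l * Real.exp (-lam j * s) with hg
    have hexpand : ∀ l, (fun s => (g l s)^2) =
        fun s => ∑ j, ∑ k, (x j * σ j l * (x k * σ k l)) * Real.exp (-(lam j + lam k) * s) := by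
      intro l
      funext s
      rw [sq, hg, Finset.sum_mul_sum]
      refine Finset.sum_congr rfl fun j _ => Finset.sum_congr rfl fun k _ => ?_
      have he : Real.exp (-lam j * s) * Real.exp (-lam k * s)
          = Real.exp (-(lam j + lam k) * s) := by
        rw [← Real.exp_add]; congr 1; ring
      calc x j * σ j l * Real.exp (-lam j * s) * (x k * σ k l * Real.exp (-lam k * s))
          = (x j * σ j l * (x k * σ k l)) * (Real.exp (-lam j * s) * Real.exp (-lam k * s)) := by
            ring
        _ = _ := by rw [he]
    have hint : ∀ (c a : ℝ), 0 < a →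
        IntegrableOn (fun s => c * Real.exp (-a * s)) (Ioi (0:ℝ)) := fun c a ha =>
      (exp_neg_integrableOn_Ioi 0 ha).const_mul c
    have hgint : ∀ l, IntegrableOn (fun s => (g l s)^2) (Ioi (0:ℝ)) := by
      intro l
      rw [hexpand l]
      exact integrable_finset_sum _ fun j _ =>
        integrable_finset_sum _ fun k _ => hint _ _ (hlam j k)
    have key : ∀ l, ∫ s in Ioi (0:ℝ), (g l s)^2 =
        ∑ j, ∑ k, x j * σ j l * (x k * σ k l) / (lam j + lam k) := by
      intro l
      rw [hexpand l]
      rw [integral_finset_sum _ fun j _ =>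
        integrable_finset_sum _ fun k _ => hint _ _ (hlam j k)]
      refine Finset.sum_congr rfl fun j _ => ?_
      rw [integral_finset_sum _ fun k _ => hint _ _ (hlam j k)]
      refine Finset.sum_congr rfl fun k _ => ?_
      rw [MeasureTheory.integral_const_mul, integral_exp_neg_mul_Ioi_zero' (hlam j k)]
      field_simp
    have hquad : x ⬝ᵥ (covInf lam σ *ᵥ x) = ∑ l, ∫ s in Ioi (0:ℝ), (g l s)^2 := by
      calc x ⬝ᵥ (covInf lam σ *ᵥ x)
          = ∑ j, ∑ k, ∑ l, x j * (σ j l * σ k l / (lam j + lam k) * x k) := by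
            simp only [dotProduct, mulVec, covInf, Matrix.of_apply]
            refine Finset.sum_congr rfl fun j _ => ?_
            rw [Finset.mul_sum]
            refine Finset.sum_congr rfl fun k _ => ?_
            rw [Finset.sum_mul, Finset.mul_sum]
        _ = ∑ j, ∑ k, ∑ l, x j * σ j l * (x k * σ k l) / (lam j + lam k) := by
            refine Finset.sum_congr rfl fun j _ => Finset.sum_congr rfl fun k _ =>
              Finset.sum_congr rfl fun l _ => by ring
        _ = ∑ j, ∑ l, ∑ k, x j * σ j l * (x k * σ k l) / (lam j + lam k) :=
            Finset.sum_congr rfl fun j _ => Finset.sum_comm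
        _ = ∑ l, ∑ j, ∑ k, x j * σ j l * (x k * σ k l) / (lam j + lam k) :=
            Finset.sum_comm
        _ = ∑ l, ∫ s in Ioi (0:ℝ), (g l s)^2 :=
            Finset.sum_congr rfl fun l _ => (key l).symm
    rw [hquad]
    obtain ⟨l₀, hl₀⟩ : ∃ l₀, (x ᵥ* σ) l₀ ≠ 0 := by
      by_contra h
      push_neg at h
      exact vecMul_ne_zero' σ hrank hx (funext h)
    set c := (x ᵥ* σ) l₀ with hc
    have hg0 : g l₀ 0 = c := by
      simp [hg, hc, Matrix.vecMul, dotProduct]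
    have hgc : Continuous (g l₀) := by
      apply continuous_finset_sum
      intro j _
      exact continuous_const.mul ((continuous_const.mul continuous_id).rexp)
    obtain ⟨δ, hδpos, hδ⟩ := Metric.continuousAt_iff.mp hgc.continuousAt (|c| / 2)
      (by have : c ≠ 0 := hl₀; positivity)
    have hlow : ∀ s ∈ Ioc (0:ℝ) (δ/2), c^2/4 ≤ (g l₀ s)^2 := by
      intro s hs
      have hd : dist s 0 < δ := by
        rw [Real.dist_eq, sub_zero, abs_of_pos hs.1]
        linarith [hs.2, hδpos]
      have h2 := hδ hd
      rw [hg0, Real.dist_eq] at h2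
      have h1 : |c| / 2 ≤ |g l₀ s| := by
        have h3 := abs_sub_abs_le_abs_sub c (g l₀ s)
        rw [abs_sub_comm] at h3
        linarith
      calc c^2/4 = (|c|/2)^2 := by rw [div_pow, sq_abs]; norm_num
        _ ≤ |g l₀ s|^2 := by
            have h0 : (0:ℝ) ≤ |c|/2 := by positivity
            exact pow_le_pow_left₀ h0 h1 2
        _ = (g l₀ s)^2 := sq_abs _
    have hl₀pos : 0 < ∫ s in Ioi (0:ℝ), (g l₀ s)^2 := by
      have hsub : Ioc (0:ℝ) (δ/2) ⊆ Ioi 0 := Ioc_subset_Ioi_self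
      have hmono : ∫ s in Ioc (0:ℝ) (δ/2), (g l₀ s)^2 ≤ ∫ s in Ioi (0:ℝ), (g l₀ s)^2 :=
        setIntegral_mono_set (hgint l₀)
          (Filter.Eventually.of_forall fun s => sq_nonneg _)
          (HasSubset.Subset.eventuallyLE hsub)
      have hge := setIntegral_ge_of_const_le (c := c^2/4) measurableSet_Ioc
        (by simp) hlow ((hgint l₀).mono_set hsub)
      have hvol : volume.real (Ioc (0:ℝ) (δ/2)) = δ/2 := by
        simp [Measure.real_def, Real.volume_Ioc]
        linarith
      rw [hvol, smul_eq_mul] at hge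
      have : 0 < c^2/4 * (δ/2) := by
        have : c ≠ 0 := hl₀
        positivity
      linarith
    refine Finset.sum_pos' (fun l _ => setIntegral_nonneg measurableSet_Ioi
      fun s _ => sq_nonneg _) ⟨l₀, Finset.mem_univ l₀, hl₀pos⟩

lemma prod_isBigO_one {ι : Type*} (s : Finset ι) (f : ι → ℝ → ℝ)
    (h : ∀ i ∈ s, f i =O[atTop] (fun _ => (1:ℝ))) :
    (fun T => ∏ i ∈ s, f i T) =O[atTop] (fun _ => (1:ℝ)) := by
  classical
  induction s using Finset.induction with
  | empty => simpa using isBigO_const_const (1:ℝ) (one_ne_zero (α := ℝ)) atTop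
  | @insert a s ha ih =>
    have h1 := h a (Finset.mem_insert_self a s)
    have h2 := ih fun i hi => h i (Finset.mem_insert_of_mem hi)
    have h3 := h1.mul h2
    simp only [Finset.prod_insert ha]
    simpa using h3

lemma prodO' {ι : Type*} (s : Finset ι) (f : ι → ℝ → ℝ) (c : ι → ℝ) (g : ℝ → ℝ)
    (hg : g =O[atTop] (fun _ => (1:ℝ)))
    (h : ∀ i ∈ s, (fun T => f i T - c i) =O[atTop] g) :
    (fun T => (∏ i ∈ s, f i T) - ∏ i ∈ s, c i) =O[atTop] g := by
  classical
  induction s using Finset.induction with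
  | empty => simpa using isBigO_zero g atTop
  | @insert a s ha ih =>
    have hfa := h a (Finset.mem_insert_self a s)
    have hrest := ih fun i hi => h i (Finset.mem_insert_of_mem hi)
    have hbd : (fun T => ∏ i ∈ s, f i T) =O[atTop] (fun _ => (1:ℝ)) := by
      refine prod_isBigO_one s f fun i hi => ?_
      have h2 : (fun T => (f i T - c i) + c i) =O[atTop] (fun _ => (1:ℝ)) :=
        ((h i (Finset.mem_insert_of_mem hi)).trans hg).add
          (isBigO_const_const _ (one_ne_zero (α := ℝ)) atTop)
      simpa using h2
    have key : (fun T => (∏ i ∈ insert a s, f i T) - ∏ i ∈ insert a s, c i)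
        = fun T => (f a T - c a) * (∏ i ∈ s, f i T)
            + c a * ((∏ i ∈ s, f i T) - ∏ i ∈ s, c i) := by
      funext T
      simp only [Finset.prod_insert ha]
      ring
    rw [key]
    have t1 : (fun T => (f a T - c a) * ∏ i ∈ s, f i T) =O[atTop] g := by
      simpa using hfa.mul hbd
    exact t1.add (hrest.const_mul_left (c a))

lemma detO' {d : ℕ} (M : ℝ → Matrix (Fin d) (Fin d) ℝ) (N : Matrix (Fin d) (Fin d) ℝ)
    (g : ℝ → ℝ) (hg : g =O[atTop] (fun _ => (1:ℝ)))
    (h : ∀ j k, (fun T => M T j k - N j k) =O[atTop] g) :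
    (fun T => (M T).det - N.det) =O[atTop] g := by
  have key : (fun T => (M T).det - N.det) = fun T =>
      ∑ τ : Equiv.Perm (Fin d), ((Equiv.Perm.sign τ : ℤ) : ℝ) *
        ((∏ i, M T (τ i) i) - ∏ i, N (τ i) i) := by
    funext T
    rw [Matrix.det_apply', Matrix.det_apply', ← Finset.sum_sub_distrib]
    exact Finset.sum_congr rfl fun τ _ => by ring
  rw [key]
  exact IsBigO.fun_sum fun τ _ =>
    (prodO' Finset.univ (fun i T => M T (τ i) i) (fun i => N (τ i) i) g hg
      fun i _ => h (τ i) i).const_mul_left _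

/-- Quantitative exponential convergence `C_T → C₀` from Section 5.3.2:
Frobenius-norm bounds for `C_T - C₀` and `C_T⁻¹ - C₀⁻¹`, invertibility, and
convergence of the ratio of determinants. -/
theorem covariance_convergence_estimates (d n : ℕ) (hd : 0 < d) (hdn : d ≤ n)
    (lam : Fin d → ℝ) (hpos : ∀ i, 0 < lam i)
    (σ : Matrix (Fin d) (Fin n) ℝ) (hrank : σ.rank = d) :
    ∃ C > 0, ∃ q > 0, ∃ t₀ > 0, ∀ T : ℝ, t₀ ≤ T →
      (Real.sqrt (∑ j, ∑ k, (covT lam σ T j k - covInf lam σ j k) ^ 2) ≤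
          C * Real.exp (-q * T)) ∧
      (IsUnit (covT lam σ T).det ∧ IsUnit (covInf lam σ).det) ∧
      (Real.sqrt (∑ j, ∑ k, ((covT lam σ T)⁻¹ j k - (covInf lam σ)⁻¹ j k) ^ 2) ≤
          C * Real.exp (-q * T)) ∧
      |1 - Real.sqrt ((covT lam σ T).det / (covInf lam σ).det)| ≤
          C * Real.exp (-q * T) := by
  classical
  have hne : Nonempty (Fin d) := ⟨⟨0, hd⟩⟩
  have hlam : ∀ j k : Fin d, 0 < lam j + lam k := fun j k => add_pos (hpos j) (hpos k)
  -- the decay rate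
  set m : ℝ := Finset.univ.inf' Finset.univ_nonempty lam with hm_def
  have hm : 0 < m := (Finset.lt_inf'_iff _).mpr fun i _ => hpos i
  have hmle : ∀ i, m ≤ lam i := fun i => Finset.inf'_le _ (Finset.mem_univ i)
  set g : ℝ → ℝ := fun T => Real.exp (-m * T) with hg_def
  have hgpos : ∀ T, 0 < g T := fun T => Real.exp_pos _
  have hg1 : g =O[atTop] (fun _ => (1:ℝ)) := by
    rw [isBigO_iff]
    refine ⟨1, ?_⟩
    filter_upwards [eventually_ge_atTop (0:ℝ)] with T hT
    simp only [norm_one, mul_one, Real.norm_eq_abs, hg_def,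
      abs_of_pos (Real.exp_pos _)]
    exact Real.exp_le_one_iff.mpr (by nlinarith)
  have hg0 : Tendsto g atTop (nhds 0) := by
    have h0 : Tendsto (fun T : ℝ => -m * T) atTop atBot :=
      Tendsto.const_mul_atTop_of_neg (by linarith) tendsto_id
    exact Real.tendsto_exp_atBot.comp h0
  -- entrywise estimate
  have hform : ∀ (j k : Fin d) (T : ℝ), covT lam σ T j k - covInf lam σ j k
      = -(Real.exp (-(lam j + lam k) * T) / (lam j + lam k)) * ∑ l, σ j l * σ k l := by
    intro j k T
    simp only [covT, covInf, Matrix.of_apply]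
    rw [← Finset.sum_sub_distrib, Finset.mul_sum]
    refine Finset.sum_congr rfl fun l _ => ?_
    have h0 : lam j + lam k ≠ 0 := (hlam j k).ne'
    field_simp
    ring
  have hentry : ∀ j k, (fun T => covT lam σ T j k - covInf lam σ j k) =O[atTop] g := by
    intro j k
    rw [isBigO_iff]
    refine ⟨|∑ l, σ j l * σ k l| / (lam j + lam k), ?_⟩
    filter_upwards [eventually_ge_atTop (0:ℝ)] with T hT
    rw [hform j k T]
    have hexp : Real.exp (-(lam j + lam k) * T) ≤ Real.exp (-m * T) := by
      apply Real.exp_le_exp.mpr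
      nlinarith [hmle j, hpos k]
    have hgT : ‖g T‖ = Real.exp (-m * T) := by
      simp [hg_def, abs_of_pos (Real.exp_pos _)]
    rw [hgT, Real.norm_eq_abs, abs_mul, abs_neg, abs_div,
      abs_of_pos (Real.exp_pos _), abs_of_pos (hlam j k)]
    calc Real.exp (-(lam j + lam k) * T) / (lam j + lam k) * |∑ l, σ j l * σ k l|
        ≤ Real.exp (-m * T) / (lam j + lam k) * |∑ l, σ j l * σ k l| := by
          gcongr
          exact (hlam j k).le
      _ = |∑ l, σ j l * σ k l| / (lam j + lam k) * Real.exp (-m * T) := by ring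
  -- entrywise limits
  have htends : ∀ j k, Tendsto (fun T => covT lam σ T j k) atTop
      (nhds (covInf lam σ j k)) := by
    intro j k
    have h1 := (hentry j k).trans_tendsto hg0
    have h2 := h1.add_const (covInf lam σ j k)
    simpa using h2
  -- determinant estimates
  have hdetO := detO' (fun T => covT lam σ T) (covInf lam σ) g hg1 hentry
  have hdet_t : Tendsto (fun T => (covT lam σ T).det) atTop
      (nhds (covInf lam σ).det) := by
    have h1 := hdetO.trans_tendsto hg0
    have h2 := h1.add_const (covInf lam σ).det
    simpa using h2
  have hdet0 : 0 < (covInf lam σ).det := (covInf_posDef' lam hpos σ hrank).det_pos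
  have hev : ∀ᶠ T in atTop, (covInf lam σ).det / 2 < (covT lam σ T).det :=
    hdet_t.eventually (eventually_gt_nhds (by linarith))
  have hdinv_t : Tendsto (fun T => ((covT lam σ T).det)⁻¹) atTop
      (nhds (((covInf lam σ).det)⁻¹)) := hdet_t.inv₀ hdet0.ne'
  have hdinv_bd : (fun T => ((covT lam σ T).det)⁻¹) =O[atTop] (fun _ => (1:ℝ)) :=
    hdinv_t.isBigO_one ℝ
  have hdinvO : (fun T => ((covT lam σ T).det)⁻¹ - ((covInf lam σ).det)⁻¹)
      =O[atTop] g := by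
    have heq : (fun T => ((covInf lam σ).det - (covT lam σ T).det)
          * ((covT lam σ T).det)⁻¹ * ((covInf lam σ).det)⁻¹)
        =ᶠ[atTop] (fun T => ((covT lam σ T).det)⁻¹ - ((covInf lam σ).det)⁻¹) := by
      filter_upwards [hev] with T hT
      have h1 : (covT lam σ T).det ≠ 0 := by nlinarith
      have h2 : (covInf lam σ).det ≠ 0 := hdet0.ne'
      field_simp
    have hneg : (fun T => (covInf lam σ).det - (covT lam σ T).det) =O[atTop] g := by
      have := hdetO.neg_left
      simpa [neg_sub] using this
    have h3 := (hneg.mul hdinv_bd).mul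
      (isBigO_const_const (((covInf lam σ).det)⁻¹) (one_ne_zero (α := ℝ)) atTop)
    have h4 : (fun T => ((covInf lam σ).det - (covT lam σ T).det)
        * ((covT lam σ T).det)⁻¹ * ((covInf lam σ).det)⁻¹) =O[atTop] g := by
      simpa using h3
    exact h4.congr' heq (EventuallyEq.refl _ _)
  -- adjugate estimates
  have hadjO : ∀ j k, (fun T => (covT lam σ T).adjugate j k
      - (covInf lam σ).adjugate j k) =O[atTop] g := by
    intro j k
    simp only [Matrix.adjugate_apply]
    apply detO' _ _ g hg1
    intro a b
    by_cases hak : a = k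
    · subst hak
      simp only [Matrix.updateRow_self]
      simpa using isBigO_zero (E' := ℝ) g atTop
    · simp only [Matrix.updateRow_apply, hak, if_false]
      exact hentry a b
  have hadj_bd : ∀ j k, (fun T => (covT lam σ T).adjugate j k)
      =O[atTop] (fun _ => (1:ℝ)) := by
    intro j k
    have h2 : (fun T => ((covT lam σ T).adjugate j k - (covInf lam σ).adjugate j k)
        + (covInf lam σ).adjugate j k) =O[atTop] (fun _ => (1:ℝ)) :=
      ((hadjO j k).trans hg1).add (isBigO_const_const _ (one_ne_zero (α := ℝ)) atTop)
    simpa using h2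
  -- inverse entries
  have hformula : ∀ (A : Matrix (Fin d) (Fin d) ℝ) (j k : Fin d),
      A⁻¹ j k = (A.det)⁻¹ * A.adjugate j k := by
    intro A j k
    rw [Matrix.inv_def]
    simp [Ring.inverse_eq_inv']
  have hinvO : ∀ j k, (fun T => (covT lam σ T)⁻¹ j k - (covInf lam σ)⁻¹ j k)
      =O[atTop] g := by
    intro j k
    simp only [hformula]
    have key : (fun T => ((covT lam σ T).det)⁻¹ * (covT lam σ T).adjugate j k
          - ((covInf lam σ).det)⁻¹ * (covInf lam σ).adjugate j k)
        = fun T => (((covT lam σ T).det)⁻¹ - ((covInf lam σ).det)⁻¹)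
              * (covT lam σ T).adjugate j k
            + ((covInf lam σ).det)⁻¹ * ((covT lam σ T).adjugate j k
              - (covInf lam σ).adjugate j k) := by
      funext T; ring
    rw [key]
    refine IsBigO.add ?_ ((hadjO j k).const_mul_left _)
    simpa using hdinvO.mul (hadj_bd j k)
  -- collect big-O constants
  have hF1 : (fun T => ∑ j, ∑ k, |covT lam σ T j k - covInf lam σ j k|)
      =O[atTop] g :=
    IsBigO.fun_sum fun j _ => IsBigO.fun_sum fun k _ => (hentry j k).abs_left
  have hF3 : (fun T => ∑ j, ∑ k, |(covT lam σ T)⁻¹ j k - (covInf lam σ)⁻¹ j k|)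
      =O[atTop] g :=
    IsBigO.fun_sum fun j _ => IsBigO.fun_sum fun k _ => (hinvO j k).abs_left
  have hF4 : (fun T => (covInf lam σ).det - (covT lam σ T).det) =O[atTop] g := by
    have := hdetO.neg_left
    simpa [neg_sub] using this
  rw [isBigO_iff] at hF1 hF3 hF4
  obtain ⟨c₁, hc₁⟩ := hF1
  obtain ⟨c₃, hc₃⟩ := hF3
  obtain ⟨c₄, hc₄⟩ := hF4
  have hall := (hc₁.and (hc₃.and (hc₄.and hev))).and (eventually_ge_atTop (1:ℝ))
  rw [eventually_atTop] at hall
  obtain ⟨t₁, ht₁⟩ := hall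
  set D : ℝ := (covInf lam σ).det with hD
  set C : ℝ := max c₁ 0 + max c₃ 0 + max c₄ 0 / (D / 2) + 1 with hC
  have h10 : (0:ℝ) ≤ max c₁ 0 := le_max_right _ _
  have h30 : (0:ℝ) ≤ max c₃ 0 := le_max_right _ _
  have h40 : (0:ℝ) ≤ max c₄ 0 / (D / 2) := by positivity
  have hCpos : 0 < C := by rw [hC]; linarith
  refine ⟨C, hCpos, m, hm, max t₁ 1, lt_of_lt_of_le one_pos (le_max_right _ _), ?_⟩
  intro T hT
  obtain ⟨⟨h1, h3, h4, hdetT⟩, hT1⟩ := ht₁ T (le_trans (le_max_left _ _) hT)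
  have hgT : ‖g T‖ = Real.exp (-m * T) := by
    simp [hg_def, abs_of_pos (Real.exp_pos _)]
  have hepos : 0 < Real.exp (-m * T) := Real.exp_pos _
  rw [Real.norm_eq_abs, hgT] at h1 h3 h4
  have e1 : ∑ j, ∑ k, |covT lam σ T j k - covInf lam σ j k| ≤ c₁ * Real.exp (-m * T) :=
    le_trans (le_abs_self _) h1
  have e3 : ∑ j, ∑ k, |(covT lam σ T)⁻¹ j k - (covInf lam σ)⁻¹ j k|
      ≤ c₃ * Real.exp (-m * T) := le_trans (le_abs_self _) h3
  have e4 : |D - (covT lam σ T).det| ≤ c₄ * Real.exp (-m * T) := h4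
  have hdetTpos : 0 < (covT lam σ T).det := lt_trans (by linarith) hdetT
  refine ⟨?_, ⟨isUnit_iff_ne_zero.mpr hdetTpos.ne', isUnit_iff_ne_zero.mpr hdet0.ne'⟩, ?_, ?_⟩
  · calc Real.sqrt (∑ j, ∑ k, (covT lam σ T j k - covInf lam σ j k) ^ 2)
        ≤ ∑ j, ∑ k, |covT lam σ T j k - covInf lam σ j k| := sqrt_sum_sum_sq_le _
      _ ≤ c₁ * Real.exp (-m * T) := e1
      _ ≤ C * Real.exp (-m * T) := by
          have : c₁ ≤ C := by rw [hC]; linarith [le_max_left c₁ 0]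
          exact mul_le_mul_of_nonneg_right this hepos.le
  · calc Real.sqrt (∑ j, ∑ k, ((covT lam σ T)⁻¹ j k - (covInf lam σ)⁻¹ j k) ^ 2)
        ≤ ∑ j, ∑ k, |(covT lam σ T)⁻¹ j k - (covInf lam σ)⁻¹ j k| := sqrt_sum_sum_sq_le _
      _ ≤ c₃ * Real.exp (-m * T) := e3
      _ ≤ C * Real.exp (-m * T) := by
          have : c₃ ≤ C := by rw [hC]; linarith [le_max_left c₃ 0]
          exact mul_le_mul_of_nonneg_right this hepos.le
  · calc |1 - Real.sqrt ((covT lam σ T).det / D)|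
        ≤ |1 - (covT lam σ T).det / D| := abs_one_sub_sqrt_le' _
      _ = |D - (covT lam σ T).det| / D := by
          rw [show (1:ℝ) - (covT lam σ T).det / D = (D - (covT lam σ T).det) / D by
            field_simp, abs_div, abs_of_pos hdet0]
      _ ≤ c₄ * Real.exp (-m * T) / D := by gcongr
      _ ≤ C * Real.exp (-m * T) := by
          have hh : c₄ / D ≤ max c₄ 0 / (D / 2) := by
            rw [div_le_div_iff₀ hdet0 (by linarith)]
            nlinarith [le_max_left c₄ 0, le_max_right c₄ 0]
          calc c₄ * Real.exp (-m * T) / D = (c₄ / D) * Real.exp (-m * T) := by ring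
            _ ≤ (max c₄ 0 / (D / 2)) * Real.exp (-m * T) :=
                mul_le_mul_of_nonneg_right hh hepos.le
            _ ≤ C * Real.exp (-m * T) := by
                refine mul_le_mul_of_nonneg_right ?_ hepos.le
                rw [hC]; linarith
end
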